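/- arXiv:1406.0201 — 7 statements merged into one kernel-verified Lean document; each statement's English description precedes it below -/
import Mathlib

section
/- For all integers n ≥ 1 and 0 ≤ q ≤ n, and every R > 0, there exists C > 0 such that for all u ≥ 1 and all nonzero real numbers α_1, …, α_n with |α_j| ≤ R for each j, one has | ∏_{j=1}^n [α_j / (2π (1 − e^{−2u α_j}))] · ∑_{J ⊆ {1,…,n}, |J| = q} e^{−2u α_J} | ≤ C. -/
open Real Finset

/-- Core estimate: `|t| ≤ (e^{2R}/2)·|1 − e^{−2ut}|` for `t ≠ 0`, `|t| ≤ R`, `u ≥ 1`. -/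
lemma stmt5_core (R t u : ℝ) (hR : 0 < R) (ht : t ≠ 0) (htR : |t| ≤ R) (hu : 1 ≤ u) :
    |t| ≤ Real.exp (2 * R) / 2 * |1 - Real.exp (-2 * u * t)| := by
  have hu0 : (0 : ℝ) < u := lt_of_lt_of_le one_pos hu
  rcases ht.lt_or_gt with h | h
  · -- t < 0 : exp(-2ut) > 1
    have habs : |t| = -t := abs_of_neg h
    have h1 : -2 * u * t + 1 ≤ Real.exp (-2 * u * t) := Real.add_one_le_exp _
    have h2 : (1 : ℝ) ≤ Real.exp (2 * R) := Real.one_le_exp (by linarith)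
    have hpos : 0 ≤ Real.exp (-2 * u * t) - 1 := by nlinarith
    rw [abs_sub_comm, abs_of_nonneg hpos, habs]
    nlinarith
  · -- t > 0
    have habs : |t| = t := abs_of_pos h
    have htR' : t ≤ R := by rw [← habs]; exact htR
    have h1 : 2 * t + 1 ≤ Real.exp (2 * t) := Real.add_one_le_exp _
    have h2 : Real.exp (2 * t) ≤ Real.exp (2 * R) := Real.exp_le_exp.2 (by linarith)
    have h3 : Real.exp (-2 * u * t) ≤ Real.exp (-2 * t) := Real.exp_le_exp.2 (by nlinarith)
    have h4 : Real.exp (-2 * t) * Real.exp (2 * t) = 1 := by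
      rw [← Real.exp_add]; ring_nf; exact Real.exp_zero
    have h5 : Real.exp (-2 * t) < 1 := by
      rw [Real.exp_lt_one_iff]; linarith
    have hpos : 0 ≤ 1 - Real.exp (-2 * u * t) := by linarith
    rw [abs_of_nonneg hpos, habs]
    nlinarith [Real.exp_pos (-2 * t)]

/-- Core estimate with the extra `e^{-2ut}` factor. -/
lemma stmt5_core' (R t u : ℝ) (hR : 0 < R) (ht : t ≠ 0) (htR : |t| ≤ R) (hu : 1 ≤ u) :
    |t| * Real.exp (-2 * u * t) ≤ Real.exp (2 * R) / 2 * |1 - Real.exp (-2 * u * t)| := by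
  have h := stmt5_core R (-t) u hR (neg_ne_zero.2 ht) (by rwa [abs_neg]) hu
  rw [abs_neg] at h
  have he : 0 < Real.exp (-2 * u * t) := Real.exp_pos _
  have hmul : (1 - Real.exp (-2 * u * -t)) * Real.exp (-2 * u * t)
      = -(1 - Real.exp (-2 * u * t)) := by
    rw [sub_mul, one_mul, ← Real.exp_add]
    have h0 : -2 * u * -t + -2 * u * t = 0 := by ring
    rw [h0, Real.exp_zero]; ring
  have key : |1 - Real.exp (-2 * u * -t)| * Real.exp (-2 * u * t)
      = |1 - Real.exp (-2 * u * t)| := by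
    calc |1 - Real.exp (-2 * u * -t)| * Real.exp (-2 * u * t)
        = |(1 - Real.exp (-2 * u * -t)) * Real.exp (-2 * u * t)| := by
          rw [abs_mul, abs_of_pos he]
      _ = |1 - Real.exp (-2 * u * t)| := by rw [hmul, abs_neg]
  calc |t| * Real.exp (-2 * u * t)
      ≤ Real.exp (2 * R) / 2 * |1 - Real.exp (-2 * u * -t)| * Real.exp (-2 * u * t) :=
        mul_le_mul_of_nonneg_right h he.le
    _ = Real.exp (2 * R) / 2 * |1 - Real.exp (-2 * u * t)| := by
        rw [mul_assoc, key]

lemma stmt5_fac (R t u : ℝ) (hR : 0 < R) (ht : t ≠ 0) (htR : |t| ≤ R) (hu : 1 ≤ u)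
    (p : Prop) [Decidable p] :
    |t / (2 * π * (1 - Real.exp (-2 * u * t))) *
      (if p then Real.exp (-2 * u * t) else 1)| ≤ Real.exp (2 * R) / (4 * π) := by
  have hπ : 0 < π := Real.pi_pos
  have hu0 : (0 : ℝ) < u := lt_of_lt_of_le one_pos hu
  have hne : (1 : ℝ) - Real.exp (-2 * u * t) ≠ 0 := by
    intro hcon
    have h1 : Real.exp (-2 * u * t) = 1 := by linarith
    have h1' : Real.exp (-2 * u * t) = Real.exp 0 := by rw [Real.exp_zero]; exact h1
    have h0 : -2 * u * t = 0 := Real.exp_eq_exp.mp h1'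
    rcases mul_eq_zero.mp h0 with h' | h'
    · rcases mul_eq_zero.mp h' with h'' | h'' <;> linarith
    · exact ht h'
  have hd : 0 < |1 - Real.exp (-2 * u * t)| := abs_pos.2 hne
  have hc0 : 0 < (if p then Real.exp (-2 * u * t) else 1) := by
    split_ifs; exacts [Real.exp_pos _, one_pos]
  have key : |t| * (if p then Real.exp (-2 * u * t) else 1)
      ≤ Real.exp (2 * R) / 2 * |1 - Real.exp (-2 * u * t)| := by
    split_ifs with hp
    · exact stmt5_core' R t u hR ht htR hu
    · rw [mul_one]; exact stmt5_core R t u hR ht htR hu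
  have e1 : |t / (2 * π * (1 - Real.exp (-2 * u * t))) *
      (if p then Real.exp (-2 * u * t) else 1)|
      = |t| * (if p then Real.exp (-2 * u * t) else 1) / (2 * π * |1 - Real.exp (-2 * u * t)|) := by
    rw [abs_mul, abs_of_pos hc0, abs_div, abs_mul, abs_mul, abs_two, abs_of_pos hπ]
    ring
  rw [e1, div_le_iff₀ (by positivity)]
  calc |t| * (if p then Real.exp (-2 * u * t) else 1)
      ≤ Real.exp (2 * R) / 2 * |1 - Real.exp (-2 * u * t)| := key
    _ = Real.exp (2 * R) / (4 * π) * (2 * π * |1 - Real.exp (-2 * u * t)|) := by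
        field_simp; ring

/-- For `n ≥ 1`, `0 ≤ q ≤ n` and `R > 0`, there is `C > 0` such that for all
`u ≥ 1` and all nonzero `α_1, …, α_n` with `|α_j| ≤ R`:
`| ∏_j [α_j / (2π (1 − e^{−2uα_j}))] · ∑_{|J| = q} e^{−2u α_J} | ≤ C`. -/
theorem stmt_5 (n : ℕ) (hn : 1 ≤ n) (q : ℕ) (hq : q ≤ n) (R : ℝ) (hR : 0 < R) :
    ∃ C > 0, ∀ u : ℝ, 1 ≤ u → ∀ α : Fin n → ℝ,
      (∀ j, α j ≠ 0) → (∀ j, |α j| ≤ R) →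
      |(∏ j : Fin n, α j / (2 * π * (1 - Real.exp (-2 * u * α j)))) *
          ∑ J ∈ Finset.powersetCard q (Finset.univ : Finset (Fin n)),
            Real.exp (-2 * u * ∑ j ∈ J, α j)| ≤ C := by
  have hπ : 0 < π := Real.pi_pos
  set K : ℝ := Real.exp (2 * R) / (4 * π) with hK
  have hK0 : 0 < K := by positivity
  refine ⟨(n.choose q : ℝ) * K ^ n, ?_, ?_⟩
  · have : 0 < n.choose q := Nat.choose_pos hq
    positivity
  intro u hu α hα hαR
  have hterm : ∀ J ∈ Finset.powersetCard q (Finset.univ : Finset (Fin n)),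
      |(∏ j : Fin n, α j / (2 * π * (1 - Real.exp (-2 * u * α j)))) *
        Real.exp (-2 * u * ∑ j ∈ J, α j)| ≤ K ^ n := by
    intro J _
    have e1 : Real.exp (-2 * u * ∑ j ∈ J, α j)
        = ∏ j : Fin n, (if j ∈ J then Real.exp (-2 * u * α j) else 1) := by
      calc Real.exp (-2 * u * ∑ j ∈ J, α j) = ∏ j ∈ J, Real.exp (-2 * u * α j) := by
            rw [Finset.mul_sum, Real.exp_sum]
        _ = ∏ j ∈ (Finset.univ : Finset (Fin n)) ∩ J, Real.exp (-2 * u * α j) := by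
            rw [Finset.univ_inter]
        _ = ∏ j : Fin n, (if j ∈ J then Real.exp (-2 * u * α j) else 1) :=
            (Finset.prod_ite_mem Finset.univ J _).symm
    rw [e1, ← Finset.prod_mul_distrib, Finset.abs_prod]
    calc ∏ j : Fin n, |α j / (2 * π * (1 - Real.exp (-2 * u * α j))) *
          (if j ∈ J then Real.exp (-2 * u * α j) else 1)|
        ≤ ∏ _j : Fin n, K :=
          Finset.prod_le_prod (fun j _ => abs_nonneg _)
            (fun j _ => stmt5_fac R (α j) u hR (hα j) (hαR j) hu _)
      _ = K ^ n := by simp [Finset.prod_const]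
  calc |(∏ j : Fin n, α j / (2 * π * (1 - Real.exp (-2 * u * α j)))) *
        ∑ J ∈ Finset.powersetCard q (Finset.univ : Finset (Fin n)),
          Real.exp (-2 * u * ∑ j ∈ J, α j)|
      = |∑ J ∈ Finset.powersetCard q (Finset.univ : Finset (Fin n)),
          (∏ j : Fin n, α j / (2 * π * (1 - Real.exp (-2 * u * α j)))) *
            Real.exp (-2 * u * ∑ j ∈ J, α j)| := by rw [Finset.mul_sum]
    _ ≤ ∑ J ∈ Finset.powersetCard q (Finset.univ : Finset (Fin n)),
          |(∏ j : Fin n, α j / (2 * π * (1 - Real.exp (-2 * u * α j)))) *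
            Real.exp (-2 * u * ∑ j ∈ J, α j)| := Finset.abs_sum_le_sum_abs _ _
    _ ≤ ∑ _J ∈ Finset.powersetCard q (Finset.univ : Finset (Fin n)), K ^ n :=
          Finset.sum_le_sum hterm
    _ = (n.choose q : ℝ) * K ^ n := by
          rw [Finset.sum_const, nsmul_eq_mul, Finset.card_powersetCard, Finset.card_univ,
            Fintype.card_fin]
end

section
/- Let α_1, …, α_n be nonzero real numbers and let 0 ≤ q ≤ n. If the number of negative α_j is not equal to q, then lim_{u→∞} ∑_{J ⊆ {1,…,n}, |J| = q} e^{−2u α_J} · ∏_{j=1}^n [α_j / (2π (1 − e^{−2u α_j}))] = 0. -/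
open Real Finset Filter

lemma exp_neg_lim (a : ℝ) (ha : 0 < a) :
    Tendsto (fun u : ℝ => Real.exp (-2 * u * a)) atTop (nhds 0) := by
  rw [Real.tendsto_exp_comp_nhds_zero]
  have : Tendsto (fun u : ℝ => u * (-2 * a)) atTop atBot :=
    tendsto_id.atTop_mul_const_of_neg (by linarith)
  convert this using 2 with u
  ring

/-- If `α_1, …, α_n` are nonzero reals and the number of negative ones is not
`q`, then `lim_{u→∞} ∑_{|J| = q} e^{−2u α_J} · ∏_j [α_j / (2π (1 − e^{−2uα_j}))] = 0`. -/
theorem stmt_7 (n q : ℕ) (hq : q ≤ n) (α : Fin n → ℝ) (hα : ∀ j, α j ≠ 0)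
    (hneg : (Finset.univ.filter fun j => α j < 0).card ≠ q) :
    Tendsto
      (fun u : ℝ =>
        (∑ J ∈ Finset.powersetCard q (Finset.univ : Finset (Fin n)),
            Real.exp (-2 * u * ∑ j ∈ J, α j)) *
          ∏ j : Fin n, α j / (2 * π * (1 - Real.exp (-2 * u * α j))))
      atTop (nhds 0) := by
  have hπ : (2 : ℝ) * π ≠ 0 := by positivity
  have key : ∀ J ∈ Finset.powersetCard q (Finset.univ : Finset (Fin n)),
      Tendsto (fun u : ℝ => Real.exp (-2 * u * ∑ j ∈ J, α j) *
        ∏ j : Fin n, α j / (2 * π * (1 - Real.exp (-2 * u * α j)))) atTop (nhds 0) := by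
    intro J hJ
    have hJcard : J.card = q := (Finset.mem_powersetCard.mp hJ).2
    -- rewrite as a single product
    have hrw : (fun u : ℝ => Real.exp (-2 * u * ∑ j ∈ J, α j) *
        ∏ j : Fin n, α j / (2 * π * (1 - Real.exp (-2 * u * α j)))) =
        fun u : ℝ => ∏ j : Fin n,
          ((if j ∈ J then Real.exp (-2 * u * α j) else 1) *
            (α j / (2 * π * (1 - Real.exp (-2 * u * α j))))) := by
      funext u
      rw [Finset.prod_mul_distrib]
      congr 1
      rw [Finset.prod_ite_mem, Finset.univ_inter, ← Real.exp_sum]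
      congr 1
      rw [Finset.mul_sum]
    rw [hrw]
    -- per-factor limits
    have hfac : ∀ j : Fin n, ∃ l : ℝ, Tendsto (fun u : ℝ =>
        (if j ∈ J then Real.exp (-2 * u * α j) else 1) *
          (α j / (2 * π * (1 - Real.exp (-2 * u * α j))))) atTop (nhds l) ∧
        (¬ (j ∈ J ↔ α j < 0) → l = 0) := by
      intro j
      rcases (hα j).lt_or_gt with hneg' | hpos
      · -- α j < 0
        have hE : Tendsto (fun u : ℝ => Real.exp (2 * u * α j)) atTop (nhds 0) := by
          have := exp_neg_lim (-α j) (by linarith)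
          convert this using 3 with u; ring
        have hdenne : 2 * π * ((0:ℝ) - 1) ≠ 0 := by
          intro h
          rcases mul_eq_zero.mp h with h | h
          · exact hπ h
          · norm_num at h
        by_cases hjJ : j ∈ J
        · refine ⟨α j / (2 * π * (0 - 1)), ?_, fun h => absurd ⟨fun _ => hneg', fun _ => hjJ⟩ h⟩
          simp only [if_pos hjJ]
          have heq : (fun u : ℝ => Real.exp (-2 * u * α j) *
              (α j / (2 * π * (1 - Real.exp (-2 * u * α j))))) =ᶠ[atTop]
              fun u : ℝ => α j / (2 * π * (Real.exp (2 * u * α j) - 1)) := by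
            filter_upwards [eventually_gt_atTop (0 : ℝ)] with u hu
            have hE1 : Real.exp (2 * u * α j) < 1 := by
              apply Real.exp_lt_one_iff.mpr; nlinarith
            have hE0 : Real.exp (2 * u * α j) ≠ 0 := (Real.exp_pos _).ne'
            have hEm1 : Real.exp (2 * u * α j) - 1 ≠ 0 := by intro h; nlinarith
            have hinvgt : 1 < (Real.exp (2 * u * α j))⁻¹ :=
              (one_lt_inv_iff₀).mpr ⟨Real.exp_pos _, hE1⟩
            have h1mE : 1 - (Real.exp (2 * u * α j))⁻¹ ≠ 0 := by intro h; nlinarith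
            have hinv : Real.exp (-2 * u * α j) = (Real.exp (2 * u * α j))⁻¹ := by
              rw [← Real.exp_neg]; ring_nf
            rw [hinv]
            field_simp
          refine Tendsto.congr' heq.symm ?_
          exact tendsto_const_nhds.div (tendsto_const_nhds.mul (hE.sub tendsto_const_nhds)) hdenne
        · refine ⟨0, ?_, fun _ => rfl⟩
          simp only [if_neg hjJ, one_mul]
          have heq : (fun u : ℝ => α j / (2 * π * (1 - Real.exp (-2 * u * α j)))) =ᶠ[atTop]
              fun u : ℝ => (α j * Real.exp (2 * u * α j)) /
                (2 * π * (Real.exp (2 * u * α j) - 1)) := by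
            filter_upwards [eventually_gt_atTop (0 : ℝ)] with u hu
            have hE1 : Real.exp (2 * u * α j) < 1 := by
              apply Real.exp_lt_one_iff.mpr; nlinarith
            have hE0 : Real.exp (2 * u * α j) ≠ 0 := (Real.exp_pos _).ne'
            have hEm1 : Real.exp (2 * u * α j) - 1 ≠ 0 := by intro h; nlinarith
            have hinvgt : 1 < (Real.exp (2 * u * α j))⁻¹ :=
              (one_lt_inv_iff₀).mpr ⟨Real.exp_pos _, hE1⟩
            have h1mE : 1 - (Real.exp (2 * u * α j))⁻¹ ≠ 0 := by intro h; nlinarith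
            have hinv : Real.exp (-2 * u * α j) = (Real.exp (2 * u * α j))⁻¹ := by
              rw [← Real.exp_neg]; ring_nf
            rw [hinv]
            field_simp
          refine Tendsto.congr' heq.symm ?_
          have h1 : Tendsto (fun u : ℝ => α j * Real.exp (2 * u * α j)) atTop
              (nhds (α j * 0)) := tendsto_const_nhds.mul hE
          have h2 : Tendsto (fun u : ℝ => 2 * π * (Real.exp (2 * u * α j) - 1)) atTop
              (nhds (2 * π * (0 - 1))) :=
            tendsto_const_nhds.mul (hE.sub tendsto_const_nhds)
          have : Tendsto (fun u : ℝ => α j * Real.exp (2 * u * α j) /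
              (2 * π * (Real.exp (2 * u * α j) - 1))) atTop
              (nhds (α j * 0 / (2 * π * (0 - 1)))) := h1.div h2 hdenne
          simpa using this
      · -- α j > 0
        have hE : Tendsto (fun u : ℝ => Real.exp (-2 * u * α j)) atTop (nhds 0) :=
          exp_neg_lim (α j) hpos
        have h2 : Tendsto (fun u : ℝ => α j / (2 * π * (1 - Real.exp (-2 * u * α j)))) atTop
            (nhds (α j / (2 * π * (1 - 0)))) := by
          refine tendsto_const_nhds.div (tendsto_const_nhds.mul (tendsto_const_nhds.sub hE)) ?_
          intro h; rcases mul_eq_zero.mp h with h | h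
          · exact hπ h
          · norm_num at h
        by_cases hjJ : j ∈ J
        · refine ⟨0, ?_, fun _ => rfl⟩
          simp only [if_pos hjJ]
          simpa using hE.mul h2
        · refine ⟨α j / (2 * π * (1 - 0)), ?_,
            fun h => absurd ⟨fun hh => absurd hh hjJ,
              fun hh => absurd hh (not_lt.mpr hpos.le)⟩ h⟩
          simp only [if_neg hjJ, one_mul]
          exact h2
    choose L hT hZ using hfac
    have hprod := tendsto_finset_prod (Finset.univ : Finset (Fin n)) (fun j _ => hT j)
    have hzero : ∏ j ∈ (Finset.univ : Finset (Fin n)), L j = 0 := by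
      have hJne : J ≠ Finset.univ.filter fun j => α j < 0 := by
        intro h; apply hneg; rw [← h]; exact hJcard
      have : ∃ j : Fin n, ¬ (j ∈ J ↔ α j < 0) := by
        by_contra hc
        push_neg at hc
        apply hJne
        ext j
        simp [Finset.mem_filter, hc j]
      obtain ⟨j0, hj0⟩ := this
      exact Finset.prod_eq_zero (Finset.mem_univ j0) (hZ j0 hj0)
    rw [hzero] at hprod
    exact hprod
  have hsum := tendsto_finset_sum (Finset.powersetCard q (Finset.univ : Finset (Fin n))) key
  simp only [Finset.sum_const_zero] at hsum
  have hfun : (fun u : ℝ =>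
      (∑ J ∈ Finset.powersetCard q (Finset.univ : Finset (Fin n)),
          Real.exp (-2 * u * ∑ j ∈ J, α j)) *
        ∏ j : Fin n, α j / (2 * π * (1 - Real.exp (-2 * u * α j)))) =
      fun u : ℝ => ∑ J ∈ Finset.powersetCard q (Finset.univ : Finset (Fin n)),
        Real.exp (-2 * u * ∑ j ∈ J, α j) *
          ∏ j : Fin n, α j / (2 * π * (1 - Real.exp (-2 * u * α j))) := by
    funext u; rw [Finset.sum_mul]
  rw [hfun]
  exact hsum
end

section
/- Let α_1, …, α_n be real numbers, with n_- of them negative, n_0 of them zero, and n_+ of them positive, and let q be an integer with n_- ≤ q ≤ n_- + n_0. Then lim_{u→∞} ∑_{J ⊆ {1,…,n}, |J| = q} e^{u(α_{∁J} − α_J)} · ∏_{j : α_j ≠ 0} [α_j / sinh(u α_j)] = C(n_0, q − n_-) · (−1)^{n_-} · ∏_{j : α_j ≠ 0} (2 α_j), where C(n_0, q − n_-) denotes the binomial coefficient 'n_0 choose q − n_-'. -/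
open Real Finset Filter

lemma sinh_rewrite {x : ℝ} : Real.sinh x = Real.exp x * (1 - Real.exp (-(2 * x))) / 2 := by
  rw [Real.sinh_eq, mul_sub, mul_one, ← Real.exp_add]
  ring_nf

lemma exp_neg_two_lim {b : ℝ} (hb : 0 < b) :
    Tendsto (fun u : ℝ => Real.exp (-(2 * (u * b)))) atTop (nhds 0) := by
  have h : Tendsto (fun u : ℝ => 2 * (u * b)) atTop atTop := by
    exact (tendsto_id.atTop_mul_const hb).const_mul_atTop two_pos
  exact Real.tendsto_exp_neg_atTop_nhds_zero.comp h

lemma denom_lim {b : ℝ} (hb : 0 < b) :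
    Tendsto (fun u : ℝ => 1 - Real.exp (-(2 * (u * b)))) atTop (nhds 1) := by
  simpa using (exp_neg_two_lim hb).const_sub 1

lemma lim_pos {b : ℝ} (hb : 0 < b) :
    Tendsto (fun u : ℝ => Real.exp (u * b) * (b / Real.sinh (u * b))) atTop (nhds (2 * b)) := by
  have h2 : Tendsto (fun u : ℝ => 2 * b / (1 - Real.exp (-(2 * (u * b))))) atTop (nhds (2 * b)) := by
    simpa [Pi.div_def] using tendsto_const_nhds.div (denom_lim hb) one_ne_zero
  refine h2.congr' ?_
  filter_upwards [eventually_gt_atTop (0:ℝ)] with u hu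
  have hub : 0 < u * b := mul_pos hu hb
  have he : Real.exp (-(2 * (u * b))) < 1 := by
    rw [Real.exp_lt_one_iff]; linarith
  have hd : 1 - Real.exp (-(2 * (u * b))) ≠ 0 := by linarith
  rw [sinh_rewrite]
  have hE := Real.exp_ne_zero (u * b)
  field_simp

lemma lim_neg {b : ℝ} (hb : 0 < b) :
    Tendsto (fun u : ℝ => Real.exp (-(u * b)) * (b / Real.sinh (u * b))) atTop (nhds 0) := by
  have h2 : Tendsto (fun u : ℝ => 2 * b * Real.exp (-(2 * (u * b))) / (1 - Real.exp (-(2 * (u * b))))) atTop (nhds 0) := by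
    have := ((exp_neg_two_lim hb).const_mul (2*b)).div (denom_lim hb) one_ne_zero
    simpa [Pi.div_def] using this
  refine h2.congr' ?_
  filter_upwards [eventually_gt_atTop (0:ℝ)] with u hu
  have hub : 0 < u * b := mul_pos hu hb
  have he : Real.exp (-(2 * (u * b))) < 1 := by
    rw [Real.exp_lt_one_iff]; linarith
  have hd : 1 - Real.exp (-(2 * (u * b))) ≠ 0 := by linarith
  have hkey : Real.exp (-(2*(u*b))) = Real.exp (-(u*b)) * Real.exp (-(u*b)) := by
    rw [← Real.exp_add]; ring_nf
  have hE := Real.exp_ne_zero (u * b)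
  have hd' : 1 - Real.exp (-(u*b)) * Real.exp (-(u*b)) ≠ 0 := by rw [← hkey]; exact hd
  have hinv : Real.exp (-(u*b)) * Real.exp (u*b) = 1 := by
    rw [← Real.exp_add]; simp
  rw [sinh_rewrite, hkey]
  field_simp
  rw [← Real.exp_add, neg_add_cancel, Real.exp_zero]

lemma frac_abs (a u : ℝ) : a / Real.sinh (u * a) = |a| / Real.sinh (u * |a|) := by
  rcases le_or_gt 0 a with h | h
  · rw [abs_of_nonneg h]
  · rw [abs_of_neg h, mul_neg, Real.sinh_neg, neg_div_neg_eq]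


/-- Let `α_1, …, α_n` be reals with `n₋` negative, `n₀` zero, and let
`n₋ ≤ q ≤ n₋ + n₀`.  Then
`lim_{u→∞} ∑_{|J| = q} e^{u(α_{∁J} − α_J)} ∏_{α_j ≠ 0} [α_j / sinh(u α_j)]
  = (n₀ choose (q − n₋)) · (−1)^{n₋} · ∏_{α_j ≠ 0} 2 α_j`. -/
theorem stmt_8 (n : ℕ) (α : Fin n → ℝ) (nneg nzero q : ℕ)
    (hneg : (Finset.univ.filter fun j => α j < 0).card = nneg)
    (hzero : (Finset.univ.filter fun j => α j = 0).card = nzero)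
    (hq1 : nneg ≤ q) (hq2 : q ≤ nneg + nzero) :
    Tendsto
      (fun u : ℝ =>
        ∑ J ∈ Finset.powersetCard q (Finset.univ : Finset (Fin n)),
          Real.exp (u * ((∑ j ∈ Jᶜ, α j) - ∑ j ∈ J, α j)) *
            ∏ j ∈ Finset.univ.filter fun j => α j ≠ 0,
              α j / Real.sinh (u * α j))
      atTop
      (nhds ((nzero.choose (q - nneg) : ℝ) * (-1) ^ nneg *
        ∏ j ∈ Finset.univ.filter fun j => α j ≠ 0, 2 * α j)) := by
  classical
  set N : Finset (Fin n) := Finset.univ.filter (fun j => α j ≠ 0) with hN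
  set Z : Finset (Fin n) := Finset.univ.filter (fun j => α j = 0) with hZ
  set Ng : Finset (Fin n) := Finset.univ.filter (fun j => α j < 0) with hNg
  -- Step 1: per-J limits
  have key : ∀ J ∈ Finset.powersetCard q (Finset.univ : Finset (Fin n)),
      Tendsto (fun u : ℝ => Real.exp (u * ((∑ j ∈ Jᶜ, α j) - ∑ j ∈ J, α j)) *
          ∏ j ∈ N, α j / Real.sinh (u * α j)) atTop
        (nhds (∏ j ∈ N, if (j ∈ J ↔ α j < 0) then 2 * |α j| else 0)) := by
    intro J _
    have hsum : ∀ u : ℝ, u * ((∑ j ∈ Jᶜ, α j) - ∑ j ∈ J, α j)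
        = ∑ j ∈ N, u * (if j ∈ J then -α j else α j) := by
      intro u
      rw [← Finset.mul_sum]
      congr 1
      have hext : ∑ j ∈ N, (if j ∈ J then -α j else α j)
          = ∑ j ∈ Finset.univ, (if j ∈ J then -α j else α j) := by
        apply Finset.sum_subset (Finset.subset_univ N)
        intro j _ hj
        simp only [hN, Finset.mem_filter, Finset.mem_univ, true_and, not_not] at hj
        simp [hj]
      rw [hext, ← Finset.sum_add_sum_compl J]
      have h1 : ∑ j ∈ J, (if j ∈ J then -α j else α j) = -∑ j ∈ J, α j := by
        rw [← Finset.sum_neg_distrib]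
        exact Finset.sum_congr rfl (fun j hj => if_pos hj)
      have h2 : ∑ j ∈ Jᶜ, (if j ∈ J then -α j else α j) = ∑ j ∈ Jᶜ, α j := by
        refine Finset.sum_congr rfl (fun j hj => if_neg ?_)
        simpa using hj
      rw [h1, h2]; ring
    have hfun : ∀ u : ℝ, Real.exp (u * ((∑ j ∈ Jᶜ, α j) - ∑ j ∈ J, α j)) *
        ∏ j ∈ N, α j / Real.sinh (u * α j)
        = ∏ j ∈ N, (Real.exp (u * (if j ∈ J then -α j else α j)) *
            (α j / Real.sinh (u * α j))) := by
      intro u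
      rw [hsum u, Real.exp_sum, ← Finset.prod_mul_distrib]
    refine Tendsto.congr (fun u => (hfun u).symm) (tendsto_finset_prod _ ?_)
    intro j hj
    have hne : α j ≠ 0 := by
      simpa only [hN, Finset.mem_filter, Finset.mem_univ, true_and] using hj
    have hb : 0 < |α j| := abs_pos.mpr hne
    by_cases hJ : j ∈ J
    · rcases hne.lt_or_gt with hα | hα
      · -- j ∈ J, α j < 0 : limit 2|α j|
        rw [if_pos (iff_of_true hJ hα)]
        have heq : ∀ u : ℝ, Real.exp (u * (if j ∈ J then -α j else α j)) *
            (α j / Real.sinh (u * α j))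
            = Real.exp (u * |α j|) * (|α j| / Real.sinh (u * |α j|)) := by
          intro u
          rw [if_pos hJ, frac_abs, abs_of_neg hα]
        exact Tendsto.congr (fun u => (heq u).symm) (lim_pos hb)
      · -- j ∈ J, α j > 0 : limit 0
        rw [if_neg (show ¬(j ∈ J ↔ α j < 0) from fun h => absurd (h.mp hJ) (not_lt.mpr hα.le))]
        have heq : ∀ u : ℝ, Real.exp (u * (if j ∈ J then -α j else α j)) *
            (α j / Real.sinh (u * α j))
            = Real.exp (-(u * |α j|)) * (|α j| / Real.sinh (u * |α j|)) := by
          intro u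
          rw [if_pos hJ, frac_abs, abs_of_pos hα]; ring_nf
        exact Tendsto.congr (fun u => (heq u).symm) (lim_neg hb)
    · rcases hne.lt_or_gt with hα | hα
      · -- j ∉ J, α j < 0 : limit 0
        rw [if_neg (show ¬(j ∈ J ↔ α j < 0) from fun h => hJ (h.mpr hα))]
        have heq : ∀ u : ℝ, Real.exp (u * (if j ∈ J then -α j else α j)) *
            (α j / Real.sinh (u * α j))
            = Real.exp (-(u * |α j|)) * (|α j| / Real.sinh (u * |α j|)) := by
          intro u
          rw [if_neg hJ, frac_abs, abs_of_neg hα]; ring_nf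
        exact Tendsto.congr (fun u => (heq u).symm) (lim_neg hb)
      · -- j ∉ J, α j > 0 : limit 2|α j|
        rw [if_pos (iff_of_false hJ (not_lt.mpr hα.le))]
        have heq : ∀ u : ℝ, Real.exp (u * (if j ∈ J then -α j else α j)) *
            (α j / Real.sinh (u * α j))
            = Real.exp (u * |α j|) * (|α j| / Real.sinh (u * |α j|)) := by
          intro u
          rw [if_neg hJ, frac_abs, abs_of_pos hα]
        exact Tendsto.congr (fun u => (heq u).symm) (lim_pos hb)
  -- Step 2: evaluate the limit value per J
  have hLval : ∀ J : Finset (Fin n),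
      (∏ j ∈ N, if (j ∈ J ↔ α j < 0) then 2 * |α j| else 0)
      = if (∀ j ∈ N, (j ∈ J ↔ α j < 0)) then ∏ j ∈ N, 2 * |α j| else 0 := by
    intro J
    by_cases h : ∀ j ∈ N, (j ∈ J ↔ α j < 0)
    · rw [if_pos h]
      exact Finset.prod_congr rfl (fun j hj => if_pos (h j hj))
    · rw [if_neg h]
      simp only [not_forall, Classical.not_imp] at h
      obtain ⟨j, hj, hcond⟩ := h
      exact Finset.prod_eq_zero hj (if_neg hcond)
  -- Step 3: counting
  have hcard : ((Finset.powersetCard q (Finset.univ : Finset (Fin n))).filter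
      (fun J => ∀ j ∈ N, (j ∈ J ↔ α j < 0))).card = nzero.choose (q - nneg) := by
    have hNgsub : ∀ j, j ∈ Ng → j ∈ N := by
      intro j hj
      simp only [hNg, Finset.mem_filter, Finset.mem_univ, true_and] at hj
      simp [hN, ne_of_lt hj]
    have hdisjNgZ : Disjoint Ng Z := by
      rw [Finset.disjoint_left]
      intro j hj hz
      simp only [hNg, hZ, Finset.mem_filter, Finset.mem_univ, true_and] at hj hz
      exact absurd hz (ne_of_lt hj)
    have hbij : ((Finset.powersetCard q (Finset.univ : Finset (Fin n))).filter
        (fun J => ∀ j ∈ N, (j ∈ J ↔ α j < 0))).card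
        = (Finset.powersetCard (q - nneg) Z).card := by
      apply Finset.card_bij' (fun J _ => J ∩ Z) (fun K _ => K ∪ Ng)
      · -- maps into powersetCard (q-nneg) Z
        intro J hJ
        simp only [Finset.mem_filter, Finset.mem_powersetCard] at hJ
        obtain ⟨⟨-, hcardJ⟩, hP⟩ := hJ
        have hJN : J ∩ N = Ng := by
          ext j
          simp only [Finset.mem_inter, hN, hNg, Finset.mem_filter, Finset.mem_univ, true_and]
          constructor
          · rintro ⟨hjJ, hne⟩
            exact (hP j (by simp [hN, hne])).mp hjJ
          · intro hlt
            exact ⟨(hP j (by simp [hN, ne_of_lt hlt])).mpr hlt, ne_of_lt hlt⟩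
        have hsplit : J = (J ∩ N) ∪ (J ∩ Z) := by
          ext j
          simp only [Finset.mem_union, Finset.mem_inter, hN, hZ, Finset.mem_filter,
            Finset.mem_univ, true_and]
          by_cases h : α j = 0 <;> tauto
        have hdisj : Disjoint (J ∩ N) (J ∩ Z) := by
          rw [Finset.disjoint_left]
          intro j hj1 hj2
          simp only [Finset.mem_inter, hN, hZ, Finset.mem_filter, Finset.mem_univ,
            true_and] at hj1 hj2
          exact hj1.2 hj2.2
        have hcards : (J ∩ N).card + (J ∩ Z).card = q := by
          rw [← Finset.card_union_of_disjoint hdisj, ← hsplit, hcardJ]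
        rw [Finset.mem_powersetCard]
        constructor
        · exact Finset.inter_subset_right
        · rw [hJN, hneg] at hcards
          omega
      · -- reverse map
        intro K hK
        rw [Finset.mem_powersetCard] at hK
        obtain ⟨hKZ, hKcard⟩ := hK
        have hdisjKNg : Disjoint K Ng := by
          rw [Finset.disjoint_left]
          intro j hj hng
          exact (Finset.disjoint_left.mp hdisjNgZ) hng (hKZ hj)
        simp only [Finset.mem_filter, Finset.mem_powersetCard]
        refine ⟨⟨Finset.subset_univ _, ?_⟩, ?_⟩
        · rw [Finset.card_union_of_disjoint hdisjKNg, hKcard, hneg]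
          omega
        · intro j hj
          have hne : α j ≠ 0 := by
            simpa only [hN, Finset.mem_filter, Finset.mem_univ, true_and] using hj
          simp only [Finset.mem_union]
          constructor
          · rintro (hjK | hjNg)
            · exact absurd (by simpa [hZ] using hKZ hjK) hne
            · simpa [hNg] using hjNg
          · intro hlt
            right
            simp [hNg, hlt]
      · -- left inverse
        intro J hJ
        simp only [Finset.mem_filter, Finset.mem_powersetCard] at hJ
        obtain ⟨⟨-, hcardJ⟩, hP⟩ := hJ
        ext j
        simp only [Finset.mem_union, Finset.mem_inter, hZ, hNg, Finset.mem_filter,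
          Finset.mem_univ, true_and]
        constructor
        · rintro (⟨hjJ, -⟩ | hlt)
          · exact hjJ
          · exact (hP j (by simp [hN, ne_of_lt hlt])).mpr hlt
        · intro hjJ
          by_cases h : α j = 0
          · exact Or.inl ⟨hjJ, h⟩
          · exact Or.inr ((hP j (by simp [hN, h])).mp hjJ)
      · -- right inverse
        intro K hK
        rw [Finset.mem_powersetCard] at hK
        obtain ⟨hKZ, -⟩ := hK
        ext j
        simp only [Finset.mem_inter, Finset.mem_union]
        constructor
        · rintro ⟨hjK | hjNg, hjZ⟩
          · exact hjK
          · exact absurd hjZ (Finset.disjoint_left.mp hdisjNgZ hjNg)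
        · intro hjK
          exact ⟨Or.inl hjK, hKZ hjK⟩
    rw [hbij, Finset.card_powersetCard, hzero]
  -- Step 4: sign
  have hsign : ∏ j ∈ N, (2 * α j) = (-1 : ℝ) ^ nneg * ∏ j ∈ N, (2 * |α j|) := by
    have h1 : ∀ j ∈ N, (2 * α j) = (if α j < 0 then (-1 : ℝ) else 1) * (2 * |α j|) := by
      intro j _
      by_cases h : α j < 0
      · rw [if_pos h, abs_of_neg h]; ring
      · rw [if_neg h, abs_of_nonneg (not_lt.mp h)]; ring
    rw [Finset.prod_congr rfl h1, Finset.prod_mul_distrib]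
    congr 1
    rw [Finset.prod_ite, Finset.prod_const, Finset.prod_const, one_pow, mul_one]
    congr 1
    rw [← hneg, hN, Finset.filter_filter, hNg]
    congr 1
    ext j
    simp only [Finset.mem_filter, Finset.mem_univ, true_and]
    exact ⟨fun h => h.2, fun h => ⟨ne_of_lt h, h⟩⟩
  -- Combine
  have hfinal : (∑ J ∈ Finset.powersetCard q (Finset.univ : Finset (Fin n)),
      ∏ j ∈ N, if (j ∈ J ↔ α j < 0) then 2 * |α j| else 0)
      = (nzero.choose (q - nneg) : ℝ) * (-1) ^ nneg * ∏ j ∈ N, 2 * α j := by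
    calc (∑ J ∈ Finset.powersetCard q (Finset.univ : Finset (Fin n)),
        ∏ j ∈ N, if (j ∈ J ↔ α j < 0) then 2 * |α j| else 0)
        = ∑ J ∈ Finset.powersetCard q (Finset.univ : Finset (Fin n)),
            if (∀ j ∈ N, (j ∈ J ↔ α j < 0)) then ∏ j ∈ N, 2 * |α j| else 0 := by
          exact Finset.sum_congr rfl (fun J _ => hLval J)
      _ = ∑ J ∈ (Finset.powersetCard q (Finset.univ : Finset (Fin n))).filter
            (fun J => ∀ j ∈ N, (j ∈ J ↔ α j < 0)), ∏ j ∈ N, 2 * |α j| := by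
          rw [Finset.sum_filter]
      _ = (nzero.choose (q - nneg) : ℝ) * ∏ j ∈ N, 2 * |α j| := by
          rw [Finset.sum_const, hcard, nsmul_eq_mul]
      _ = (nzero.choose (q - nneg) : ℝ) * (-1) ^ nneg * ∏ j ∈ N, 2 * α j := by
          rw [hsign]
          have h1 : ((-1 : ℝ)) ^ nneg * (-1) ^ nneg = 1 := by
            rw [← pow_add]
            exact Even.neg_one_pow ⟨nneg, rfl⟩
          linear_combination (-((nzero.choose (q - nneg) : ℝ) * ∏ j ∈ N, 2 * |α j|)) * h1
  exact hfinal ▸ tendsto_finset_sum _ key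
end

section
/- Let α_1, …, α_n be real numbers, with n_- of them negative and n_0 of them zero, and let q be an integer with 0 ≤ q ≤ n such that q < n_- or q > n_- + n_0. Then lim_{u→∞} ∑_{J ⊆ {1,…,n}, |J| = q} e^{u(α_{∁J} − α_J)} · ∏_{j : α_j ≠ 0} [α_j / sinh(u α_j)] = 0. -/
open Real Finset Filter

private lemma sinh_lower {t : ℝ} (ht : 1 ≤ t) : Real.exp t / 4 ≤ Real.sinh t := by
  rw [Real.sinh_eq]
  have h1 : Real.exp (-t) ≤ 1 / 2 := by
    have : Real.exp (-t) ≤ Real.exp (-1) := Real.exp_le_exp.mpr (by linarith)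
    have h2 : Real.exp (-1) ≤ 1 / 2 := by
      rw [Real.exp_neg]
      have h3 : (2 : ℝ) ≤ Real.exp 1 := by nlinarith [Real.add_one_le_exp (1 : ℝ)]
      calc (Real.exp 1)⁻¹ ≤ (2 : ℝ)⁻¹ := inv_anti₀ (by norm_num) h3
        _ = 1 / 2 := by norm_num
    linarith
  have h3 : (1 : ℝ) ≤ Real.exp t := Real.one_le_exp (by linarith)
  nlinarith

private lemma term_tendsto {n : ℕ} (α : Fin n → ℝ) (J : Finset (Fin n))
    (hd : ((∑ j ∈ Jᶜ, α j) - ∑ j ∈ J, α j)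
        - ∑ j ∈ Finset.univ.filter (fun j => α j ≠ 0), |α j| < 0) :
    Tendsto (fun u : ℝ => Real.exp (u * ((∑ j ∈ Jᶜ, α j) - ∑ j ∈ J, α j)) *
      ∏ j ∈ Finset.univ.filter (fun j => α j ≠ 0), α j / Real.sinh (u * α j))
      atTop (nhds 0) := by
  set S := Finset.univ.filter (fun j : Fin n => α j ≠ 0) with hS
  set c := (∑ j ∈ Jᶜ, α j) - ∑ j ∈ J, α j with hc
  set d := c - ∑ j ∈ S, |α j| with hdd
  set C := ∏ j ∈ S, (4 * |α j|) with hC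
  have hg : Tendsto (fun u : ℝ => C * Real.exp (u * d)) atTop (nhds 0) := by
    have h1 : Tendsto (fun u : ℝ => u * d) atTop atBot := by
      have := Filter.tendsto_id.atTop_mul_const (r := -d) (by linarith)
      have h2 : Tendsto (fun u : ℝ => -(u * (-d))) atTop atBot :=
        tendsto_neg_atTop_atBot.comp this
      simpa using h2
    have := (Real.tendsto_exp_atBot.comp h1).const_mul C
    simpa using this
  rw [tendsto_zero_iff_abs_tendsto_zero]
  apply squeeze_zero' (Filter.Eventually.of_forall fun u => abs_nonneg _) _ hg
  have hev : ∀ᶠ u : ℝ in atTop, ∀ j ∈ S, 1 ≤ u * |α j| := by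
    rw [Finset.eventually_all]
    intro j hj
    have hj' : 0 < |α j| := abs_pos.mpr (by simpa [hS] using (Finset.mem_filter.mp hj).2)
    exact (Filter.tendsto_id.atTop_mul_const hj').eventually_ge_atTop 1
  filter_upwards [hev, eventually_ge_atTop (0 : ℝ)] with u hu hu0
  have key : ∀ j ∈ S, |α j / Real.sinh (u * α j)| ≤ 4 * |α j| * Real.exp (-(u * |α j|)) := by
    intro j hj
    have h1 : 1 ≤ u * |α j| := hu j hj
    have habs : |Real.sinh (u * α j)| = Real.sinh (u * |α j|) := by
      rw [Real.abs_sinh, abs_mul, abs_of_nonneg hu0]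
    have hsl : Real.exp (u * |α j|) / 4 ≤ Real.sinh (u * |α j|) := sinh_lower h1
    have hsp : 0 < Real.sinh (u * |α j|) := lt_of_lt_of_le (by positivity) hsl
    rw [abs_div, habs, div_le_iff₀ hsp]
    have hexp : 0 < Real.exp (u * |α j|) := Real.exp_pos _
    calc |α j| = 4 * |α j| * Real.exp (-(u * |α j|)) * (Real.exp (u * |α j|) / 4) := by
          rw [Real.exp_neg]; field_simp
      _ ≤ 4 * |α j| * Real.exp (-(u * |α j|)) * Real.sinh (u * |α j|) := by
          apply mul_le_mul_of_nonneg_left hsl; positivity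
  calc |Real.exp (u * c) * ∏ j ∈ S, α j / Real.sinh (u * α j)|
      = Real.exp (u * c) * ∏ j ∈ S, |α j / Real.sinh (u * α j)| := by
        rw [abs_mul, abs_of_nonneg (Real.exp_pos _).le, Finset.abs_prod]
    _ ≤ Real.exp (u * c) * ∏ j ∈ S, (4 * |α j| * Real.exp (-(u * |α j|))) := by
        apply mul_le_mul_of_nonneg_left _ (Real.exp_pos _).le
        exact Finset.prod_le_prod (fun j _ => abs_nonneg _) key
    _ = C * Real.exp (u * d) := by
        rw [Finset.prod_mul_distrib, ← Real.exp_sum, ← hC, mul_left_comm, ← Real.exp_add]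
        congr 2
        rw [hdd, Finset.sum_neg_distrib, ← Finset.mul_sum]
        ring

private lemma exponent_neg {n : ℕ} (α : Fin n → ℝ) (nneg nzero q : ℕ)
    (hneg : (Finset.univ.filter fun j => α j < 0).card = nneg)
    (hzero : (Finset.univ.filter fun j => α j = 0).card = nzero)
    (hq : q < nneg ∨ nneg + nzero < q) (J : Finset (Fin n)) (hJ : J.card = q) :
    ((∑ j ∈ Jᶜ, α j) - ∑ j ∈ J, α j)
        - ∑ j ∈ Finset.univ.filter (fun j => α j ≠ 0), |α j| < 0 := by
  have hsplit : ((∑ j ∈ Jᶜ, α j) - ∑ j ∈ J, α j)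
      - ∑ j ∈ Finset.univ.filter (fun j => α j ≠ 0), |α j|
      = ∑ j : Fin n, ((if j ∈ J then -α j else α j) - |α j|) := by
    rw [Finset.sum_sub_distrib]
    congr 1
    · rw [← Finset.sum_add_sum_compl J (fun j => if j ∈ J then -α j else α j)]
      rw [Finset.sum_congr rfl (fun j hj => if_pos hj),
        Finset.sum_congr rfl (fun j hj => if_neg (Finset.mem_compl.mp hj))]
      rw [Finset.sum_neg_distrib]
      ring
    · exact Finset.sum_filter_of_ne (fun x _ hx => abs_ne_zero.mp hx)
  rw [hsplit]
  have hle : ∀ j ∈ (Finset.univ : Finset (Fin n)),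
      (if j ∈ J then -α j else α j) - |α j| ≤ 0 := by
    intro j _
    split
    · have := neg_abs_le (α j); linarith [abs_nonneg (α j), neg_le_abs (α j)]
    · linarith [le_abs_self (α j)]
  obtain ⟨j₀, hj₀⟩ : ∃ j₀ : Fin n, (if j₀ ∈ J then -α j₀ else α j₀) - |α j₀| < 0 := by
    rcases hq with h | h
    · have hns : ¬ (Finset.univ.filter fun j => α j < 0) ⊆ J := by
        intro hsub
        have := Finset.card_le_card hsub
        omega
      obtain ⟨j₀, hj₀mem, hj₀n⟩ := Finset.not_subset.mp hns
      have hαj : α j₀ < 0 := (Finset.mem_filter.mp hj₀mem).2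
      exact ⟨j₀, by rw [if_neg hj₀n, abs_of_neg hαj]; linarith⟩
    · have hcard : (Finset.univ.filter fun j => α j ≤ 0).card = nneg + nzero := by
        have hun : (Finset.univ.filter fun j => α j ≤ 0)
            = (Finset.univ.filter fun j => α j < 0) ∪
              (Finset.univ.filter fun j => α j = 0) := by
          ext j
          simp [le_iff_lt_or_eq]
        rw [hun, Finset.card_union_of_disjoint, hneg, hzero]
        rw [Finset.disjoint_filter]
        intro x _ h1 h2
        exact absurd h2 (ne_of_lt h1)
      have hns : ¬ J ⊆ (Finset.univ.filter fun j => α j ≤ 0) := by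
        intro hsub
        have := Finset.card_le_card hsub
        omega
      obtain ⟨j₀, hj₀mem, hj₀n⟩ := Finset.not_subset.mp hns
      have hαj : 0 < α j₀ := by
        by_contra hcon
        exact hj₀n (Finset.mem_filter.mpr ⟨Finset.mem_univ _, not_lt.mp hcon⟩)
      exact ⟨j₀, by rw [if_pos hj₀mem, abs_of_pos hαj]; linarith⟩
  calc ∑ j : Fin n, ((if j ∈ J then -α j else α j) - |α j|)
      < ∑ _j : Fin n, (0 : ℝ) :=
        Finset.sum_lt_sum hle ⟨j₀, Finset.mem_univ _, hj₀⟩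
    _ = 0 := by simp

/-- Let `α_1, …, α_n` be reals with `n₋` negative and `n₀` zero, and let
`0 ≤ q ≤ n` with `q < n₋` or `q > n₋ + n₀`.  Then
`lim_{u→∞} ∑_{|J| = q} e^{u(α_{∁J} − α_J)} ∏_{α_j ≠ 0} [α_j / sinh(u α_j)] = 0`. -/
theorem stmt_9 (n : ℕ) (α : Fin n → ℝ) (nneg nzero q : ℕ)
    (hneg : (Finset.univ.filter fun j => α j < 0).card = nneg)
    (hzero : (Finset.univ.filter fun j => α j = 0).card = nzero)
    (hqn : q ≤ n) (hq : q < nneg ∨ nneg + nzero < q) :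
    Tendsto
      (fun u : ℝ =>
        ∑ J ∈ Finset.powersetCard q (Finset.univ : Finset (Fin n)),
          Real.exp (u * ((∑ j ∈ Jᶜ, α j) - ∑ j ∈ J, α j)) *
            ∏ j ∈ Finset.univ.filter fun j => α j ≠ 0,
              α j / Real.sinh (u * α j))
      atTop (nhds 0) := by
  have h := tendsto_finset_sum (Finset.powersetCard q (Finset.univ : Finset (Fin n)))
    (fun J hJ => term_tendsto α J (exponent_neg α nneg nzero q hneg hzero hq J
      (Finset.mem_powersetCard.mp hJ).2))
  simpa using h
end

section
/- Let V_0, …, V_n be finite-dimensional complex inner product spaces and d_j : V_j → V_{j+1} linear maps (with d_{−1} = 0 and d_n = 0) satisfying d_{j+1} ∘ d_j = 0 for all j. Let Δ_j = d_j† ∘ d_j + d_{j−1} ∘ d_{j−1}† be the Laplacians, where † denotes the adjoint with respect to the inner products. Then for every u > 0 and every 0 ≤ q ≤ n, ∑_{j=0}^q (−1)^{q−j} dim ker Δ_j ≤ ∑_{j=0}^q (−1)^{q−j} Tr(exp(−u Δ_j)), with equality when q = n. -/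
open Finset LinearMap

noncomputable section Helpers

open NormedSpace

variable {W W' : Type*}
  [NormedAddCommGroup W] [InnerProductSpace ℂ W] [FiniteDimensional ℂ W]
  [NormedAddCommGroup W'] [InnerProductSpace ℂ W'] [FiniteDimensional ℂ W']

/-- trace as a continuous linear map on CLMs -/
def trCLM (W : Type*) [NormedAddCommGroup W] [InnerProductSpace ℂ W] [FiniteDimensional ℂ W] :
    (W →L[ℂ] W) →L[ℂ] ℂ :=
  LinearMap.toContinuousLinearMap ((LinearMap.trace ℂ W) ∘ₗ (ContinuousLinearMap.coeLM ℂ))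

lemma trCLM_apply (x : W →L[ℂ] W) : trCLM W x = LinearMap.trace ℂ W x.toLinearMap := by
  simp [trCLM]

lemma trace_exp_eq_tsum (x : W →L[ℂ] W) :
    LinearMap.trace ℂ W (exp x).toLinearMap
      = ∑' n : ℕ, ((n.factorial : ℂ))⁻¹ • trCLM W (x ^ n) := by
  rw [← trCLM_apply, exp_eq_tsum ℂ]
  rw [ContinuousLinearMap.map_tsum (trCLM W) (expSeries_summable' x)]
  simp

lemma trace_pow_summable (x : W →L[ℂ] W) :
    Summable (fun n : ℕ => ((n.factorial : ℂ))⁻¹ • trCLM W (x ^ n)) := by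
  have h := (expSeries_summable' (𝕂 := ℂ) x).map (trCLM W) (trCLM W).continuous
  simpa [Function.comp_def] using h

end Helpers

noncomputable section Helpers2

open NormedSpace

variable {W W' : Type*}
  [NormedAddCommGroup W] [InnerProductSpace ℂ W] [FiniteDimensional ℂ W]
  [NormedAddCommGroup W'] [InnerProductSpace ℂ W'] [FiniteDimensional ℂ W']

/-- The complex trace of `exp(-u T)`. -/
def trC (u : ℝ) (T : W →ₗ[ℂ] W) : ℂ :=
  LinearMap.trace ℂ W ((exp ((-(u : ℂ)) • T.toContinuousLinearMap)).toLinearMap)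

def cf (u : ℝ) (n : ℕ) : ℂ := ((n.factorial : ℂ))⁻¹ * (-(u : ℂ)) ^ n

lemma toCLM_pow (T : W →ₗ[ℂ] W) (n : ℕ) :
    ((T.toContinuousLinearMap ^ n : W →L[ℂ] W) : W →ₗ[ℂ] W) = T ^ n := by
  induction n with
  | zero => rfl
  | succ n ih =>
      rw [pow_succ, pow_succ, ← ih]
      rfl

lemma term_eq (u : ℝ) (T : W →ₗ[ℂ] W) (n : ℕ) :
    ((n.factorial : ℂ))⁻¹ • trCLM W (((-(u : ℂ)) • T.toContinuousLinearMap) ^ n)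
      = cf u n * LinearMap.trace ℂ W (T ^ n) := by
  rw [smul_pow, map_smul, trCLM_apply, toCLM_pow]
  simp [cf, smul_eq_mul]
  ring

lemma trC_eq_tsum (u : ℝ) (T : W →ₗ[ℂ] W) :
    trC u T = ∑' n : ℕ, cf u n * LinearMap.trace ℂ W (T ^ n) := by
  rw [trC, trace_exp_eq_tsum]
  exact tsum_congr (term_eq u T)

lemma trC_summable (u : ℝ) (T : W →ₗ[ℂ] W) :
    Summable (fun n : ℕ => cf u n * LinearMap.trace ℂ W (T ^ n)) :=
  (trace_pow_summable ((-(u : ℂ)) • T.toContinuousLinearMap)).congr (term_eq u T)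

lemma cf_zero (u : ℝ) : cf u 0 = 1 := by simp [cf]

lemma head_eq (u : ℝ) (T : W →ₗ[ℂ] W) :
    cf u 0 * LinearMap.trace ℂ W (T ^ 0) = (Module.finrank ℂ W : ℂ) := by
  simp [cf_zero, LinearMap.trace_one]

lemma tsum_sub_head {f g : ℕ → ℂ} (hf : Summable f) (hg : Summable g)
    (h : ∀ n, f (n + 1) = g (n + 1)) :
    (∑' n, f n) - f 0 = (∑' n, g n) - g 0 := by
  have hf1 := Summable.sum_add_tsum_nat_add 1 hf
  have hg1 := Summable.sum_add_tsum_nat_add 1 hg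
  simp only [Finset.sum_range_one] at hf1 hg1
  have : (∑' i : ℕ, f (i + 1)) = ∑' i : ℕ, g (i + 1) := tsum_congr fun n => h n
  rw [← hf1, ← hg1, this]
  ring

end Helpers2

noncomputable section Helpers3

open NormedSpace Module

variable {W W' : Type*}
  [NormedAddCommGroup W] [InnerProductSpace ℂ W] [FiniteDimensional ℂ W]
  [NormedAddCommGroup W'] [InnerProductSpace ℂ W'] [FiniteDimensional ℂ W']

lemma pow_adj_comp (e : W →ₗ[ℂ] W') (n : ℕ) :
    (adjoint e ∘ₗ e) ^ (n + 1) = adjoint e ∘ₗ (((e ∘ₗ adjoint e) ^ n) ∘ₗ e) := by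
  induction n with
  | zero => simp [pow_one, Module.End.one_eq_id]
  | succ n ih =>
      rw [pow_succ, ih, pow_succ]
      simp only [Module.End.mul_eq_comp]
      simp only [LinearMap.comp_assoc]

lemma trace_pow_cross (e : W →ₗ[ℂ] W') (n : ℕ) :
    LinearMap.trace ℂ W ((adjoint e ∘ₗ e) ^ (n + 1))
      = LinearMap.trace ℂ W' ((e ∘ₗ adjoint e) ^ (n + 1)) := by
  rw [pow_adj_comp, LinearMap.trace_comp_comm']
  rw [pow_succ]
  simp only [Module.End.mul_eq_comp]
  rw [LinearMap.comp_assoc]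

lemma pow_add_split {A B : W →ₗ[ℂ] W} (hAB : A ∘ₗ B = 0) (hBA : B ∘ₗ A = 0) (n : ℕ) :
    (A + B) ^ (n + 1) = A ^ (n + 1) + B ^ (n + 1) := by
  have hAB' : A * B = 0 := hAB
  have hBA' : B * A = 0 := hBA
  induction n with
  | zero => simp
  | succ n ih =>
      rw [pow_succ (A + B), ih, add_mul, mul_add, mul_add]
      have h1 : A ^ (n + 1) * B = 0 := by
        rw [pow_succ, mul_assoc, hAB', mul_zero]
      have h2 : B ^ (n + 1) * A = 0 := by
        rw [pow_succ, mul_assoc, hBA', mul_zero]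
      rw [h1, h2, ← pow_succ, ← pow_succ]
      abel

lemma trC_cross (u : ℝ) (e : W →ₗ[ℂ] W') :
    trC u (adjoint e ∘ₗ e) - (finrank ℂ W : ℂ)
      = trC u (e ∘ₗ adjoint e) - (finrank ℂ W' : ℂ) := by
  rw [trC_eq_tsum, trC_eq_tsum, ← head_eq u (adjoint e ∘ₗ e), ← head_eq u (e ∘ₗ adjoint e)]
  exact tsum_sub_head (trC_summable u _) (trC_summable u _)
    (fun n => by rw [trace_pow_cross e n])

lemma trC_add (u : ℝ) {A B : W →ₗ[ℂ] W} (hAB : A ∘ₗ B = 0) (hBA : B ∘ₗ A = 0) :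
    trC u (A + B) = trC u A + trC u B - (finrank ℂ W : ℂ) := by
  have hsum : Summable (fun n : ℕ => cf u n * LinearMap.trace ℂ W (A ^ n)
      + cf u n * LinearMap.trace ℂ W (B ^ n)) := (trC_summable u A).add (trC_summable u B)
  have key : (∑' n : ℕ, cf u n * LinearMap.trace ℂ W ((A + B) ^ n))
        - cf u 0 * LinearMap.trace ℂ W ((A + B) ^ 0)
      = (∑' n : ℕ, (cf u n * LinearMap.trace ℂ W (A ^ n)
            + cf u n * LinearMap.trace ℂ W (B ^ n)))
        - (cf u 0 * LinearMap.trace ℂ W (A ^ 0) + cf u 0 * LinearMap.trace ℂ W (B ^ 0)) :=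
    tsum_sub_head (trC_summable u _) hsum
      (fun n => by rw [pow_add_split hAB hBA n, map_add, mul_add])
  rw [Summable.tsum_add (trC_summable u A) (trC_summable u B)] at key
  rw [trC_eq_tsum, trC_eq_tsum, trC_eq_tsum]
  have h0 : ∀ T : W →ₗ[ℂ] W, cf u 0 * LinearMap.trace ℂ W (T ^ 0) = (finrank ℂ W : ℂ) :=
    fun T => head_eq u T
  rw [h0, h0, h0] at key
  linear_combination key

end Helpers3

noncomputable section Helpers4

open Module

variable {W W' W₁ W₂ : Type*}
  [NormedAddCommGroup W] [InnerProductSpace ℂ W] [FiniteDimensional ℂ W]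
  [NormedAddCommGroup W'] [InnerProductSpace ℂ W'] [FiniteDimensional ℂ W']
  [NormedAddCommGroup W₁] [InnerProductSpace ℂ W₁] [FiniteDimensional ℂ W₁]
  [NormedAddCommGroup W₂] [InnerProductSpace ℂ W₂] [FiniteDimensional ℂ W₂]

local notation "⟪" x ", " y "⟫" => @inner ℂ _ _ x y

lemma ker_adj_comp (e : W →ₗ[ℂ] W') : ker (adjoint e ∘ₗ e) = ker e := by
  ext x
  simp only [LinearMap.mem_ker, LinearMap.comp_apply]
  constructor
  · intro h
    have h2 : ⟪e x, e x⟫ = 0 := by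
      rw [← LinearMap.adjoint_inner_left e x (e x)]
      rw [h, inner_zero_left]
    exact inner_self_eq_zero.mp h2
  · intro h
    rw [h, map_zero]

lemma ker_comp_adj (e : W →ₗ[ℂ] W') : ker (e ∘ₗ adjoint e) = ker (adjoint e) := by
  have h := ker_adj_comp (adjoint e)
  rwa [adjoint_adjoint] at h

lemma ker_adjoint_eq_orthogonal (e : W →ₗ[ℂ] W') :
    ker (adjoint e) = (LinearMap.range e)ᗮ := by
  ext x
  simp only [LinearMap.mem_ker, Submodule.mem_orthogonal]
  constructor
  · intro h u hu
    obtain ⟨y, rfl⟩ := hu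
    calc ⟪e y, x⟫ = ⟪y, adjoint e x⟫ := by
          conv_lhs => rw [← adjoint_adjoint e]
          rw [LinearMap.adjoint_inner_left]
        _ = 0 := by rw [h, inner_zero_right]
  · intro h
    have h2 : ⟪adjoint e x, adjoint e x⟫ = 0 := by
      rw [LinearMap.adjoint_inner_left]
      have := h (e (adjoint e x)) ⟨adjoint e x, rfl⟩
      rw [← inner_conj_symm] at this
      simpa using congrArg (starRingEnd ℂ) this
    exact inner_self_eq_zero.mp h2

end Helpers4

noncomputable section Helpers5

open Module

variable {W W' W₁ W₂ : Type*}
  [NormedAddCommGroup W] [InnerProductSpace ℂ W] [FiniteDimensional ℂ W]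
  [NormedAddCommGroup W'] [InnerProductSpace ℂ W'] [FiniteDimensional ℂ W']
  [NormedAddCommGroup W₁] [InnerProductSpace ℂ W₁] [FiniteDimensional ℂ W₁]
  [NormedAddCommGroup W₂] [InnerProductSpace ℂ W₂] [FiniteDimensional ℂ W₂]

local notation "⟪" x ", " y "⟫" => @inner ℂ _ _ x y

lemma inner_comp_self (e : W →ₗ[ℂ] W') (x : W) :
    ⟪(adjoint e ∘ₗ e) x, x⟫ = ⟪e x, e x⟫ := by
  rw [LinearMap.comp_apply, LinearMap.adjoint_inner_left]

lemma inner_comp_self' (e : W' →ₗ[ℂ] W) (x : W) :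
    ⟪(e ∘ₗ adjoint e) x, x⟫ = ⟪adjoint e x, adjoint e x⟫ := by
  have h := inner_comp_self (adjoint e) x
  rwa [adjoint_adjoint] at h

lemma ker_laplacian (f : W →ₗ[ℂ] W₂) (g : W₁ →ₗ[ℂ] W) :
    ker (adjoint f ∘ₗ f + g ∘ₗ adjoint g)
      = ker (adjoint f ∘ₗ f) ⊓ ker (g ∘ₗ adjoint g) := by
  ext x
  simp only [LinearMap.mem_ker, Submodule.mem_inf]
  constructor
  · intro h
    have h0 : ⟪(adjoint f ∘ₗ f + g ∘ₗ adjoint g) x, x⟫ = 0 := by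
      rw [show (adjoint f ∘ₗ f + g ∘ₗ adjoint g) x = 0 from h, inner_zero_left]
    rw [LinearMap.add_apply, inner_add_left, inner_comp_self, inner_comp_self'] at h0
    have hre : RCLike.re ⟪f x, f x⟫ + RCLike.re ⟪adjoint g x, adjoint g x⟫ = 0 := by
      have := congrArg Complex.re h0
      simpa using this
    have h1 : f x = 0 := by
      have hb := inner_self_nonneg (𝕜 := ℂ) (x := adjoint g x)
      exact (re_inner_self_nonpos (𝕜 := ℂ)).mp (by linarith)
    have h2 : adjoint g x = 0 := by
      have hb := inner_self_nonneg (𝕜 := ℂ) (x := f x)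
      exact (re_inner_self_nonpos (𝕜 := ℂ)).mp (by linarith)
    constructor
    · rw [LinearMap.comp_apply, h1, map_zero]
    · rw [LinearMap.comp_apply, h2, map_zero]
  · rintro ⟨h1, h2⟩
    rw [LinearMap.add_apply, h1, h2, add_zero]

lemma sup_ker (f : W →ₗ[ℂ] W₂) (g : W₁ →ₗ[ℂ] W) (hfg : f ∘ₗ g = 0) :
    ker (adjoint f ∘ₗ f) ⊔ ker (g ∘ₗ adjoint g) = ⊤ := by
  rw [ker_adj_comp, ker_comp_adj]
  have h1 : LinearMap.range g ≤ ker f := by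
    rintro y ⟨x, rfl⟩
    have : (f ∘ₗ g) x = 0 := by rw [hfg]; rfl
    exact this
  have h2 : (LinearMap.range g)ᗮ ≤ ker (adjoint g) := by
    rw [← ker_adjoint_eq_orthogonal]
  have htop : LinearMap.range g ⊔ (LinearMap.range g)ᗮ = ⊤ :=
    Submodule.sup_orthogonal_of_hasOrthogonalProjection
  rw [eq_top_iff, ← htop]
  exact sup_le_sup h1 h2

lemma finrank_ker_laplacian (f : W →ₗ[ℂ] W₂) (g : W₁ →ₗ[ℂ] W) (hfg : f ∘ₗ g = 0) :
    (finrank ℂ (ker (adjoint f ∘ₗ f + g ∘ₗ adjoint g)) : ℝ)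
      = (finrank ℂ (ker (adjoint f ∘ₗ f)) : ℝ)
        + (finrank ℂ (ker (g ∘ₗ adjoint g)) : ℝ) - (finrank ℂ W : ℝ) := by
  have h := Submodule.finrank_sup_add_finrank_inf_eq
    (ker (adjoint f ∘ₗ f)) (ker (g ∘ₗ adjoint g))
  rw [sup_ker f g hfg, finrank_top] at h
  rw [ker_laplacian f g]
  have := congrArg (fun m : ℕ => (m : ℝ)) h
  push_cast at this ⊢
  linarith

lemma finrank_ker_cross (e : W →ₗ[ℂ] W') :
    (finrank ℂ (ker (adjoint e ∘ₗ e)) : ℝ) - (finrank ℂ W : ℝ)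
      = (finrank ℂ (ker (e ∘ₗ adjoint e)) : ℝ) - (finrank ℂ W' : ℝ) := by
  rw [ker_adj_comp, ker_comp_adj, ker_adjoint_eq_orthogonal]
  have h1 := LinearMap.finrank_range_add_finrank_ker e
  have h2 := Submodule.finrank_add_finrank_orthogonal (K := LinearMap.range e)
  have h1' := congrArg (fun m : ℕ => (m : ℝ)) h1
  have h2' := congrArg (fun m : ℕ => (m : ℝ)) h2
  push_cast at h1' h2'
  linarith

end Helpers5

noncomputable section Helpers6

open NormedSpace Module

variable {W W' : Type*}
  [NormedAddCommGroup W] [InnerProductSpace ℂ W] [FiniteDimensional ℂ W]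
  [NormedAddCommGroup W'] [InnerProductSpace ℂ W'] [FiniteDimensional ℂ W']

lemma exp_eigen (x : W →L[ℂ] W) (v : W) (c : ℂ) (h : x v = c • v) :
    exp x v = Complex.exp c • v := by
  have hpow : ∀ n : ℕ, (x ^ n) v = c ^ n • v := by
    intro n
    induction n with
    | zero => simp
    | succ n ih =>
        rw [pow_succ', pow_succ']
        rw [ContinuousLinearMap.mul_apply, ih, map_smul, h, smul_smul, mul_comm]
  have happ := (ContinuousLinearMap.apply ℂ W v).map_tsum
    (expSeries_summable' (𝕂 := ℂ) x)
  rw [exp_eq_tsum ℂ]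
  calc (∑' n : ℕ, ((n.factorial : ℂ))⁻¹ • x ^ n) v
      = ∑' n : ℕ, ((n.factorial : ℂ))⁻¹ • ((x ^ n) v) := by simpa using happ
    _ = ∑' n : ℕ, (((n.factorial : ℂ))⁻¹ * c ^ n) • v := by
        refine tsum_congr fun n => ?_
        rw [hpow n, smul_smul]
    _ = (∑' n : ℕ, ((n.factorial : ℂ))⁻¹ * c ^ n) • v :=
        Summable.tsum_smul_const (by simpa [smul_eq_mul] using expSeries_summable' (𝕂 := ℂ) c) v
    _ = Complex.exp c • v := by
        rw [Complex.exp_eq_exp_ℂ, exp_eq_tsum ℂ]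
        simp [smul_eq_mul]

lemma isSymm_adj_comp (e : W →ₗ[ℂ] W') : (adjoint e ∘ₗ e).IsSymmetric := by
  intro x y
  simp only [LinearMap.comp_apply]
  rw [LinearMap.adjoint_inner_left, LinearMap.adjoint_inner_right]

lemma finrank_ker_le_trC_re (T : W →ₗ[ℂ] W) (hT : T.IsSymmetric) (u : ℝ) :
    (finrank ℂ (ker T) : ℝ) ≤ (trC u T).re := by
  classical
  set b := hT.eigenvectorBasis rfl with hb
  set μ := hT.eigenvalues (n := finrank ℂ W) rfl with hμ
  set x := (-(u : ℂ)) • T.toContinuousLinearMap with hx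
  have hxv : ∀ i, x (b i) = ((-u * μ i : ℝ) : ℂ) • b i := by
    intro i
    rw [hx, ContinuousLinearMap.smul_apply]
    have hT1 : T.toContinuousLinearMap (b i) = (μ i : ℂ) • b i := by
      show T (b i) = (μ i : ℂ) • b i
      exact hT.apply_eigenvectorBasis rfl i
    rw [hT1, smul_smul]
    push_cast
    ring_nf
  have hexp : ∀ i, (exp x) (b i) = ((Real.exp (-u * μ i) : ℝ) : ℂ) • b i := by
    intro i
    rw [exp_eigen x (b i) _ (hxv i), Complex.ofReal_exp]
  have htr : trC u T = ∑ i, ((Real.exp (-u * μ i) : ℝ) : ℂ) := by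
    rw [trC, ← hx, LinearMap.trace_eq_matrix_trace ℂ b.toBasis, Matrix.trace]
    refine Finset.sum_congr rfl fun i _ => ?_
    rw [Matrix.diag_apply, LinearMap.toMatrix_apply]
    rw [OrthonormalBasis.coe_toBasis]
    show b.toBasis.repr ((exp x) (b i)) i = _
    rw [hexp i, map_smul]
    rw [show b i = b.toBasis i from by rw [OrthonormalBasis.coe_toBasis], Basis.repr_self]
    simp
  have htr_re : (trC u T).re = ∑ i, Real.exp (-u * μ i) := by
    rw [htr, Complex.re_sum]
    exact Finset.sum_congr rfl fun i _ => Complex.ofReal_re _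
  set S : Finset (Fin (finrank ℂ W)) := Finset.univ.filter (fun i => μ i = 0) with hS
  have hker : finrank ℂ (ker T) ≤ S.card := by
    have hspan : ker T ≤ Submodule.span ℂ ((S.image b : Finset W) : Set W) := by
      intro v hv
      have hvrepr : ∀ i, μ i ≠ 0 → b.repr v i = 0 := by
        intro i hi
        have h0 : b.repr (T v) i = (μ i : ℂ) * b.repr v i :=
          hT.eigenvectorBasis_apply_self_apply rfl v i
        rw [LinearMap.mem_ker.mp hv, map_zero] at h0
        have := h0.symm
        rcases mul_eq_zero.mp this with h | h
        · exact absurd (Complex.ofReal_eq_zero.mp h) hi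
        · exact h
      have hv2 : (∑ i ∈ S, b.repr v i • b i) = v := by
        rw [Finset.sum_subset (Finset.subset_univ S) (fun i _ hi => by
          have hμi : μ i ≠ 0 := by
            intro hc
            exact hi (Finset.mem_filter.mpr ⟨Finset.mem_univ i, hc⟩)
          rw [hvrepr i hμi, zero_smul])]
        exact b.sum_repr v
      rw [← hv2]
      refine Submodule.sum_mem _ fun i hi => Submodule.smul_mem _ _ ?_
      exact Submodule.subset_span (by
        simp only [Finset.coe_image, Set.mem_image, Finset.mem_coe]
        exact ⟨i, hi, rfl⟩)
    calc finrank ℂ (ker T)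
        ≤ finrank ℂ (Submodule.span ℂ ((S.image b : Finset W) : Set W)) :=
          Submodule.finrank_mono hspan
      _ ≤ (S.image b).card := finrank_span_finset_le_card (S.image b)
      _ ≤ S.card := Finset.card_image_le
  have hsum : (S.card : ℝ) ≤ ∑ i, Real.exp (-u * μ i) := by
    have hcard : (S.card : ℝ) = ∑ i ∈ S, Real.exp (-u * μ i) := by
      rw [Finset.card_eq_sum_ones]
      push_cast
      refine Finset.sum_congr rfl fun i hi => ?_
      rw [(Finset.mem_filter.mp hi).2, mul_zero, Real.exp_zero]
    rw [hcard]
    exact Finset.sum_le_sum_of_subset_of_nonneg (Finset.subset_univ S)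
      (fun i _ _ => (Real.exp_pos _).le)
  rw [htr_re]
  calc (finrank ℂ (ker T) : ℝ) ≤ (S.card : ℝ) := by exact_mod_cast hker
    _ ≤ _ := hsum

end Helpers6

/-- Spectral inequality for a finite cochain complex `(V_j, d_j)` of
finite-dimensional complex inner product spaces, with Laplacians
`Δ_j = d_j† d_j + d_{j−1} d_{j−1}†` (and `d_{−1} = 0`, `d_n = 0`):
for every `u > 0` and `0 ≤ q ≤ n`,
`∑_{j=0}^q (−1)^{q−j} dim ker Δ_j ≤ ∑_{j=0}^q (−1)^{q−j} Tr exp(−u Δ_j)`,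
with equality for `q = n`. -/
theorem stmt_10 (n : ℕ) (V : ℕ → Type*)
    [∀ j, NormedAddCommGroup (V j)] [∀ j, InnerProductSpace ℂ (V j)]
    [∀ j, FiniteDimensional ℂ (V j)]
    (d : ∀ j : ℕ, V j →ₗ[ℂ] V (j + 1))
    (hdn : d n = 0)
    (hdd : ∀ j, d (j + 1) ∘ₗ d j = 0)
    (Δ : ∀ j : ℕ, V j →ₗ[ℂ] V j)
    (hΔ0 : Δ 0 = adjoint (d 0) ∘ₗ d 0)
    (hΔsucc : ∀ j, Δ (j + 1) =
      adjoint (d (j + 1)) ∘ₗ d (j + 1) + d j ∘ₗ adjoint (d j))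
    (u : ℝ) (hu : 0 < u) :
    (∀ q ≤ n,
      ∑ j ∈ Finset.range (q + 1),
          (-1 : ℝ) ^ (q - j) * (Module.finrank ℂ (ker (Δ j)) : ℝ)
        ≤ ∑ j ∈ Finset.range (q + 1),
            (-1 : ℝ) ^ (q - j) *
              (LinearMap.trace ℂ (V j)
                ((NormedSpace.exp
                  ((-(u : ℂ)) • (Δ j).toContinuousLinearMap)).toLinearMap)).re)
    ∧
    ∑ j ∈ Finset.range (n + 1),
        (-1 : ℝ) ^ (n - j) * (Module.finrank ℂ (ker (Δ j)) : ℝ)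
      = ∑ j ∈ Finset.range (n + 1),
          (-1 : ℝ) ^ (n - j) *
            (LinearMap.trace ℂ (V j)
              ((NormedSpace.exp
                ((-(u : ℂ)) • (Δ j).toContinuousLinearMap)).toLinearMap)).re := by
  classical
  set G : ℕ → ℝ := fun j =>
    (trC u (adjoint (d j) ∘ₗ d j)).re
      - (Module.finrank ℂ (ker (adjoint (d j) ∘ₗ d j)) : ℝ) with hG
  set F : ℕ → ℝ := fun j =>
    (trC u (Δ j)).re - (Module.finrank ℂ (ker (Δ j)) : ℝ) with hF
  have hG_nonneg : ∀ j, 0 ≤ G j := fun j =>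
    sub_nonneg.mpr (finrank_ker_le_trC_re _ (isSymm_adj_comp (d j)) u)
  have hGn : G n = 0 := by
    have hker_top : ker (adjoint (d n) ∘ₗ d n) = ⊤ := by
      rw [ker_adj_comp, hdn, LinearMap.ker_zero]
    have hA0 : adjoint (d n) ∘ₗ d n = (0 : V n →ₗ[ℂ] V n) := by
      rw [hdn]; simp
    have h2 : trC u (0 : V n →ₗ[ℂ] V n) = (Module.finrank ℂ (V n) : ℂ) := by
      rw [trC]
      simp only [map_zero, smul_zero, NormedSpace.exp_zero]
      rw [show ((1 : V n →L[ℂ] V n) : V n →ₗ[ℂ] V n) = 1 from rfl, LinearMap.trace_one]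
    show (trC u (adjoint (d n) ∘ₗ d n)).re
        - (Module.finrank ℂ (ker (adjoint (d n) ∘ₗ d n)) : ℝ) = 0
    rw [hker_top, hA0, h2, finrank_top]
    simp
  have hF0 : F 0 = G 0 := by
    show (trC u (Δ 0)).re - (Module.finrank ℂ (ker (Δ 0)) : ℝ) = _
    rw [hΔ0]
  have hFs : ∀ j, F (j + 1) = G (j + 1) + G j := by
    intro j
    have hfg := hdd j
    have hAB : (adjoint (d (j + 1)) ∘ₗ d (j + 1)) ∘ₗ (d j ∘ₗ adjoint (d j)) = 0 := by
      ext x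
      have h0 : d (j + 1) (d j (adjoint (d j) x)) = 0 := by
        simpa using LinearMap.ext_iff.mp hfg (adjoint (d j) x)
      simp [h0]
    have hBA : (d j ∘ₗ adjoint (d j)) ∘ₗ (adjoint (d (j + 1)) ∘ₗ d (j + 1)) = 0 := by
      have hadj : adjoint (d j) ∘ₗ adjoint (d (j + 1)) = 0 := by
        rw [← LinearMap.adjoint_comp, hfg]
        simp
      ext x
      have h0 : adjoint (d j) (adjoint (d (j + 1)) (d (j + 1) x)) = 0 := by
        simpa using LinearMap.ext_iff.mp hadj (d (j + 1) x)
      simp [h0]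
    have h1 : trC u (Δ (j + 1))
        = trC u (adjoint (d (j + 1)) ∘ₗ d (j + 1)) + trC u (d j ∘ₗ adjoint (d j))
          - (Module.finrank ℂ (V (j + 1)) : ℂ) := by
      rw [hΔsucc j]
      exact trC_add u hAB hBA
    have h2 : (Module.finrank ℂ (ker (Δ (j + 1))) : ℝ)
        = (Module.finrank ℂ (ker (adjoint (d (j + 1)) ∘ₗ d (j + 1))) : ℝ)
          + (Module.finrank ℂ (ker (d j ∘ₗ adjoint (d j))) : ℝ)
          - (Module.finrank ℂ (V (j + 1)) : ℝ) := by
      rw [hΔsucc j]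
      exact finrank_ker_laplacian (d (j + 1)) (d j) hfg
    have h3 := trC_cross u (d j)
    have h4 := finrank_ker_cross (d j)
    have h1re := congrArg Complex.re h1
    have h3re := congrArg Complex.re h3
    simp only [Complex.add_re, Complex.sub_re, Complex.natCast_re] at h1re h3re
    show (trC u (Δ (j + 1))).re - (Module.finrank ℂ (ker (Δ (j + 1))) : ℝ)
        = ((trC u (adjoint (d (j + 1)) ∘ₗ d (j + 1))).re
            - (Module.finrank ℂ (ker (adjoint (d (j + 1)) ∘ₗ d (j + 1))) : ℝ))
          + ((trC u (adjoint (d j) ∘ₗ d j)).re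
            - (Module.finrank ℂ (ker (adjoint (d j) ∘ₗ d j)) : ℝ))
    linarith
  have htel : ∀ q, ∑ j ∈ Finset.range (q + 1), (-1 : ℝ) ^ (q - j) * F j = G q := by
    intro q
    induction q with
    | zero => simp [hF0]
    | succ q ih =>
        rw [Finset.sum_range_succ]
        have hsign : ∀ j ∈ Finset.range (q + 1),
            (-1 : ℝ) ^ (q + 1 - j) * F j = -((-1 : ℝ) ^ (q - j) * F j) := by
          intro j hj
          have hj' : j ≤ q := Nat.lt_succ_iff.mp (Finset.mem_range.mp hj)
          rw [show q + 1 - j = (q - j) + 1 from by omega, pow_succ]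
          ring
        rw [Finset.sum_congr rfl hsign, Finset.sum_neg_distrib, ih, Nat.sub_self,
          pow_zero, one_mul, hFs q]
        ring
  have hmain : ∀ q,
      (∑ j ∈ Finset.range (q + 1),
          (-1 : ℝ) ^ (q - j) *
            (LinearMap.trace ℂ (V j)
              ((NormedSpace.exp
                ((-(u : ℂ)) • (Δ j).toContinuousLinearMap)).toLinearMap)).re)
        - (∑ j ∈ Finset.range (q + 1),
            (-1 : ℝ) ^ (q - j) * (Module.finrank ℂ (ker (Δ j)) : ℝ)) = G q := by
    intro q
    rw [← Finset.sum_sub_distrib, ← htel q]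
    refine Finset.sum_congr rfl fun j _ => ?_
    show _ - _ = (-1 : ℝ) ^ (q - j) * ((trC u (Δ j)).re - (Module.finrank ℂ (ker (Δ j)) : ℝ))
    rw [show (LinearMap.trace ℂ (V j)
        ((NormedSpace.exp
          ((-(u : ℂ)) • (Δ j).toContinuousLinearMap)).toLinearMap)).re
        = (trC u (Δ j)).re from rfl]
    ring
  constructor
  · intro q _
    have := hmain q
    have h0 := hG_nonneg q
    linarith
  · have := hmain n
    rw [hGn] at this
    linarith
end

section
/- Fix ε > 0 and a smooth even function f : ℝ → [0,1] with f(v) = 1 for |v| ≤ ε/2 and f(v) = 0 for |v| ≥ ε, and define G_u(a) = (1/√(2π)) ∫_ℝ e^{i v a} e^{−v²/2} (1 − f(√u v)) dv for u > 0, a ∈ ℝ. Then for every m ∈ ℕ and T > 0 there exists C > 0 such that for all u with 0 < u < T and all a ∈ ℝ, |a|^m · |G_u(a)| ≤ C · exp(−ε²/(32 u)). -/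
open Real MeasureTheory

namespace Stmt14Aux

open Polynomial

lemma natle (i : ℕ) : ((i : ℕ) : WithTop ℕ∞) ≤ ((⊤ : ℕ∞) : WithTop ℕ∞) := by
  exact_mod_cast le_top

lemma gr_contDiff : ContDiff ℝ (⊤ : ℕ∞) (fun y : ℝ => Real.exp (-(y ^ 2 / 2))) :=
  (((contDiff_id.pow 2).div_const 2).neg).exp

lemma gc_contDiff : ContDiff ℝ (⊤ : ℕ∞) (fun y : ℝ => (Real.exp (-(y ^ 2 / 2)) : ℂ)) :=
  Complex.ofRealCLM.contDiff.comp gr_contDiff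

lemma gauss_bound (i : ℕ) : ∃ A : ℝ, 0 ≤ A ∧ ∀ v : ℝ,
    ‖iteratedFDeriv ℝ i (fun y : ℝ => (Real.exp (-(y ^ 2 / 2)) : ℂ)) v‖ ≤
      A * (Real.exp (-(v ^ 2 / 8)) * Real.exp (-(v ^ 2 / 4))) := by
  set p := Polynomial.hermite i with hp
  set d := p.natDegree with hd
  set S : ℝ := ∑ j ∈ Finset.range (d + 1), |(p.coeff j : ℝ)| with hS
  have hS0 : 0 ≤ S := Finset.sum_nonneg fun j _ => abs_nonneg _
  refine ⟨S * Real.exp (2 * (d : ℝ) ^ 2), by positivity, fun v => ?_⟩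
  have h1 : ‖iteratedFDeriv ℝ i (fun y : ℝ => (Real.exp (-(y ^ 2 / 2)) : ℂ)) v‖
      = ‖iteratedFDeriv ℝ i (fun y : ℝ => Real.exp (-(y ^ 2 / 2))) v‖ := by
    have := Complex.ofRealLI.norm_iteratedFDeriv_comp_left
      (f := fun y : ℝ => Real.exp (-(y ^ 2 / 2)))
      (x := v) (gr_contDiff.of_le (natle i)).contDiffAt le_rfl
    exact this
  have h2 : ‖iteratedFDeriv ℝ i (fun y : ℝ => Real.exp (-(y ^ 2 / 2))) v‖
      = |aeval v p| * Real.exp (-(v ^ 2 / 2)) := by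
    rw [norm_iteratedFDeriv_eq_norm_iteratedDeriv, iteratedDeriv_eq_iterate, Real.norm_eq_abs,
      Polynomial.deriv_gaussian_eq_hermite_mul_gaussian]
    rw [abs_mul, abs_mul, abs_pow, abs_neg, abs_one, one_pow, one_mul,
      Real.abs_exp]
  have haev : |aeval v p| ≤ S * (1 + |v|) ^ d := by
    rw [Polynomial.aeval_eq_sum_range (x := v)]
    refine (Finset.abs_sum_le_sum_abs _ _).trans ?_
    rw [hS, Finset.sum_mul]
    refine Finset.sum_le_sum fun j hj => ?_
    rw [zsmul_eq_mul, abs_mul, abs_pow]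
    refine mul_le_mul_of_nonneg_left ?_ (abs_nonneg _)
    calc |v| ^ j ≤ (1 + |v|) ^ j := by
          exact pow_le_pow_left₀ (abs_nonneg v) (by linarith) j
      _ ≤ (1 + |v|) ^ d := by
          refine pow_le_pow_right₀ (by linarith [abs_nonneg v]) ?_
          exact Nat.lt_succ_iff.mp (Finset.mem_range.mp hj)
  have hpoly : (1 + |v|) ^ d * Real.exp (-(v ^ 2 / 2)) ≤
      Real.exp (2 * (d : ℝ) ^ 2) * (Real.exp (-(v ^ 2 / 8)) * Real.exp (-(v ^ 2 / 4))) := by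
    have h3 : (1 + |v|) ^ d ≤ Real.exp (d * |v|) := by
      calc (1 + |v|) ^ d ≤ Real.exp |v| ^ d :=
            pow_le_pow_left₀ (by positivity) (by linarith [Real.add_one_le_exp |v|]) d
        _ = Real.exp (d * |v|) := (Real.exp_nat_mul _ d).symm
    calc (1 + |v|) ^ d * Real.exp (-(v ^ 2 / 2))
        ≤ Real.exp (d * |v|) * Real.exp (-(v ^ 2 / 2)) :=
          mul_le_mul_of_nonneg_right h3 (Real.exp_pos _).le
      _ = Real.exp (d * |v| - v ^ 2 / 2) := by rw [← Real.exp_add]; ring_nf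
      _ ≤ Real.exp (2 * (d : ℝ) ^ 2 + (-(v ^ 2 / 8) + -(v ^ 2 / 4))) := by
          apply Real.exp_le_exp.mpr
          nlinarith [sq_nonneg (|v| - 4 * (d : ℝ)), sq_abs v]
      _ = Real.exp (2 * (d : ℝ) ^ 2) * (Real.exp (-(v ^ 2 / 8)) * Real.exp (-(v ^ 2 / 4))) := by
          rw [Real.exp_add, Real.exp_add]
  calc ‖iteratedFDeriv ℝ i (fun y : ℝ => (Real.exp (-(y ^ 2 / 2)) : ℂ)) v‖
      = |aeval v p| * Real.exp (-(v ^ 2 / 2)) := by rw [h1, h2]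
    _ ≤ (S * (1 + |v|) ^ d) * Real.exp (-(v ^ 2 / 2)) :=
        mul_le_mul_of_nonneg_right haev (Real.exp_pos _).le
    _ = S * ((1 + |v|) ^ d * Real.exp (-(v ^ 2 / 2))) := by ring
    _ ≤ S * (Real.exp (2 * (d : ℝ) ^ 2) * (Real.exp (-(v ^ 2 / 8)) * Real.exp (-(v ^ 2 / 4)))) :=
        mul_le_mul_of_nonneg_left hpoly hS0
    _ = (S * Real.exp (2 * (d : ℝ) ^ 2)) * (Real.exp (-(v ^ 2 / 8)) * Real.exp (-(v ^ 2 / 4))) := by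
        ring

lemma exp8_integrable : Integrable (fun v : ℝ => Real.exp (-(v ^ 2 / 8))) := by
  have h : (fun v : ℝ => Real.exp (-(v ^ 2 / 8))) = fun v : ℝ => Real.exp (-(1/8 : ℝ) * v ^ 2) := by
    funext v; ring_nf
  rw [h]
  exact integrable_exp_neg_mul_sq (by norm_num)

end Stmt14Aux

/-- Fix `ε > 0` and a smooth even cutoff `f` as in (lm4.19), and let
`G_u(a) = (1/√(2π)) ∫ e^{iva} e^{−v²/2} (1 − f(√u v)) dv`.  Then for every
`m ∈ ℕ` and `T > 0` there is `C > 0` with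
`|a|^m · |G_u(a)| ≤ C · e^{−ε²/(32u)}` for all `0 < u < T` and `a ∈ ℝ`. -/
theorem stmt_14 (ε : ℝ) (hε : 0 < ε) (f : ℝ → ℝ)
    (hf : ContDiff ℝ (⊤ : ℕ∞) f)
    (hrange : ∀ v, f v ∈ Set.Icc (0 : ℝ) 1)
    (heven : ∀ v, f (-v) = f v)
    (hone : ∀ v : ℝ, |v| ≤ ε / 2 → f v = 1)
    (hzero : ∀ v : ℝ, ε ≤ |v| → f v = 0)
    (m : ℕ) (T : ℝ) (hT : 0 < T) :
    ∃ C > 0, ∀ u : ℝ, 0 < u → u < T → ∀ a : ℝ,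
      |a| ^ m *
        (fun z : ℂ => ‖z‖)
          ((Real.sqrt (2 * π) : ℂ)⁻¹ *
            ∫ v : ℝ, Complex.exp (Complex.I * v * a) *
              (Real.exp (-v ^ 2 / 2) : ℂ) *
                ((1 : ℂ) - (f (Real.sqrt u * v) : ℂ))) ≤
        C * Real.exp (-ε ^ 2 / (32 * u)) := by
  classical
  choose A hA0 hA using Stmt14Aux.gauss_bound
  -- the complex-valued cutoff and its smoothness
  set bc : ℝ → ℂ := fun w => 1 - (f w : ℂ) with hbcdef
  have hfn : ∀ n : ℕ, ContDiff ℝ (n : WithTop ℕ∞) f := fun n => hf.of_le (Stmt14Aux.natle n)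
  have hbcC : ∀ n : ℕ, ContDiff ℝ (n : WithTop ℕ∞) bc := fun n =>
    contDiff_const.sub (Complex.ofRealCLM.contDiff.comp (hfn n))
  -- compact support of f
  have hsupp : HasCompactSupport f := by
    refine HasCompactSupport.intro (isCompact_Icc (a := -ε) (b := ε)) (fun x hx => ?_)
    refine hzero x ?_
    by_contra h
    push_neg at h
    exact hx ⟨(abs_le.mp h.le).1, (abs_le.mp h.le).2⟩
  -- bounds for the derivatives of `bc`
  have hKex : ∀ j : ℕ, ∃ K : ℝ, 0 ≤ K ∧ ∀ w : ℝ, ‖iteratedDeriv j bc w‖ ≤ K := by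
    intro j
    rcases Nat.eq_zero_or_pos j with hj | hj
    · refine ⟨1, zero_le_one, fun w => ?_⟩
      subst hj
      rw [iteratedDeriv_zero]
      have : bc w = (((1 - f w : ℝ)) : ℂ) := by push_cast [hbcdef]; ring
      rw [this, Complex.norm_real, Real.norm_eq_abs]
      have h1 := (hrange w).1
      have h2 := (hrange w).2
      rw [abs_le]; constructor <;> linarith
    · have hcont : Continuous (iteratedFDeriv ℝ j f) :=
        (hf.of_le (Stmt14Aux.natle j)).continuous_iteratedFDeriv le_rfl
      obtain ⟨Cj, hCj⟩ := (hsupp.iteratedFDeriv j).exists_bound_of_continuous hcont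
      refine ⟨max Cj 0, le_max_right _ _, fun w => ?_⟩
      have e1 : iteratedDeriv j bc w = -(iteratedDeriv j (fun z : ℝ => ((f z : ℝ) : ℂ)) w) := by
        rw [hbcdef, iteratedDeriv_const_sub hj, iteratedDeriv_neg]
      rw [e1, norm_neg, ← norm_iteratedFDeriv_eq_norm_iteratedDeriv]
      have e2 : ‖iteratedFDeriv ℝ j (fun z : ℝ => ((f z : ℝ) : ℂ)) w‖ = ‖iteratedFDeriv ℝ j f w‖ :=
        Complex.ofRealLI.norm_iteratedFDeriv_comp_left (x := w) (hfn j).contDiffAt le_rfl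
      rw [e2]
      exact (hCj w).trans (le_max_left _ _)
  choose K hK0 hK using hKex
  -- the master constants
  set Λ : ℕ → ℝ := fun n => ∑ i ∈ Finset.range (n + 1),
    (n.choose i : ℝ) * A i * ((1 + Real.sqrt T) ^ m * K (n - i)) with hΛdef
  have hΛ0 : ∀ n, 0 ≤ Λ n := by
    intro n
    refine Finset.sum_nonneg fun i _ => ?_
    have h1 : (0:ℝ) ≤ (1 + Real.sqrt T) ^ m := by positivity
    have := hA0 i; have := hK0 (n - i)
    positivity
  set J : ℝ := ∫ v : ℝ, Real.exp (-(v ^ 2 / 8)) with hJdef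
  have hJ0 : 0 ≤ J := integral_nonneg fun v => (Real.exp_pos _).le
  refine ⟨Λ m * J + 1, by nlinarith [mul_nonneg (hΛ0 m) hJ0], ?_⟩
  intro u hu huT a
  set s : ℝ := Real.sqrt u with hsdef
  have hs0 : 0 < s := Real.sqrt_pos.mpr hu
  have hss : s ^ 2 = u := Real.sq_sqrt hu.le
  have hsT : s ≤ Real.sqrt T := Real.sqrt_le_sqrt huT.le
  -- the function g
  set g : ℝ → ℂ := fun v => (Real.exp (-(v ^ 2 / 2)) : ℂ) * bc (s * v) with hgdef
  have hBsC : ∀ n : ℕ, ContDiff ℝ (n : WithTop ℕ∞) (fun v : ℝ => bc (s * v)) := fun n =>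
    (hbcC n).comp (contDiff_const.mul contDiff_id)
  have hgC : ∀ n : ℕ, ContDiff ℝ (n : WithTop ℕ∞) g := fun n =>
    ((Stmt14Aux.gc_contDiff.of_le (Stmt14Aux.natle n)).mul (hBsC n))
  -- derivative bounds for the scaled cutoff
  have hBnorm : ∀ j : ℕ, j ≤ m → ∀ v : ℝ,
      ‖iteratedFDeriv ℝ j (fun v : ℝ => bc (s * v)) v‖ ≤ (1 + Real.sqrt T) ^ m * K j := by
    intro j hj v
    have e := iteratedDeriv_comp_const_smul (n := j) (hbcC j) s
    rw [norm_iteratedFDeriv_eq_norm_iteratedDeriv]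
    have e' : iteratedDeriv j (fun v : ℝ => bc (s * v)) v
        = s ^ j • iteratedDeriv j bc (s * v) := by rw [e]
    rw [e', norm_smul, norm_pow, Real.norm_eq_abs, abs_of_pos hs0]
    calc s ^ j * ‖iteratedDeriv j bc (s * v)‖
        ≤ Real.sqrt T ^ j * K j := by
          refine mul_le_mul (pow_le_pow_left₀ hs0.le hsT j) (hK j _) (norm_nonneg _) ?_
          positivity
      _ ≤ (1 + Real.sqrt T) ^ m * K j := by
          refine mul_le_mul_of_nonneg_right ?_ (hK0 j)
          calc Real.sqrt T ^ j ≤ (1 + Real.sqrt T) ^ j :=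
                pow_le_pow_left₀ (Real.sqrt_nonneg T) (by linarith) j
            _ ≤ (1 + Real.sqrt T) ^ m :=
                pow_le_pow_right₀ (by linarith [Real.sqrt_nonneg T]) hj
  -- global pointwise bound on the iterated derivatives of g
  have hGB : ∀ n : ℕ, n ≤ m → ∀ v : ℝ, ‖iteratedDeriv n g v‖ ≤
      Λ n * (Real.exp (-(v ^ 2 / 8)) * Real.exp (-(v ^ 2 / 4))) := by
    intro n hn v
    rw [← norm_iteratedFDeriv_eq_norm_iteratedDeriv]
    have hmul := norm_iteratedFDeriv_mul_le (𝕜 := ℝ)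
      (Stmt14Aux.gc_contDiff.of_le (Stmt14Aux.natle n)) (hBsC n) v
      (le_refl (n : WithTop ℕ∞))
    refine hmul.trans ?_
    have hterm : ∀ i ∈ Finset.range (n + 1),
        (n.choose i : ℝ) * ‖iteratedFDeriv ℝ i (fun y : ℝ => (Real.exp (-(y ^ 2 / 2)) : ℂ)) v‖ *
          ‖iteratedFDeriv ℝ (n - i) (fun v : ℝ => bc (s * v)) v‖ ≤
        ((n.choose i : ℝ) * A i * ((1 + Real.sqrt T) ^ m * K (n - i))) *
          (Real.exp (-(v ^ 2 / 8)) * Real.exp (-(v ^ 2 / 4))) := by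
      intro i hi
      have h1 := hA i v
      have h2 := hBnorm (n - i) (le_trans (Nat.sub_le n i) hn) v
      calc (n.choose i : ℝ) * ‖iteratedFDeriv ℝ i (fun y : ℝ => (Real.exp (-(y ^ 2 / 2)) : ℂ)) v‖ *
            ‖iteratedFDeriv ℝ (n - i) (fun v : ℝ => bc (s * v)) v‖
          ≤ (n.choose i : ℝ) * (A i * (Real.exp (-(v ^ 2 / 8)) * Real.exp (-(v ^ 2 / 4)))) *
            ((1 + Real.sqrt T) ^ m * K (n - i)) := by
            refine mul_le_mul (mul_le_mul_of_nonneg_left h1 (by positivity)) h2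
              (norm_nonneg _) ?_
            have := hA0 i
            positivity
        _ = ((n.choose i : ℝ) * A i * ((1 + Real.sqrt T) ^ m * K (n - i))) *
            (Real.exp (-(v ^ 2 / 8)) * Real.exp (-(v ^ 2 / 4))) := by ring
    refine (Finset.sum_le_sum hterm).trans (le_of_eq ?_)
    rw [hΛdef, ← Finset.sum_mul]
  -- vanishing near the origin
  have hvan : ∀ v : ℝ, |v| < ε / (2 * s) → iteratedDeriv m g v = 0 := by
    intro v hv
    have hopen : IsOpen {w : ℝ | |w| < ε / (2 * s)} :=
      isOpen_lt continuous_abs continuous_const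
    have hEq : g =ᶠ[nhds v] (fun _ : ℝ => (0 : ℂ)) := by
      filter_upwards [hopen.mem_nhds hv] with w hw
      have hfw : f (s * w) = 1 := by
        refine hone _ ?_
        rw [abs_mul, abs_of_pos hs0]
        calc s * |w| ≤ s * (ε / (2 * s)) := by
              exact mul_le_mul_of_nonneg_left (le_of_lt hw) hs0.le
          _ = ε / 2 := by field_simp
      simp only [hgdef, hbcdef, hfw]
      push_cast
      ring
    rw [hEq.iteratedDeriv_eq m]
    rw [iteratedDeriv_eq_iterate]
    have : deriv (fun _ : ℝ => (0 : ℂ)) = fun _ : ℝ => (0 : ℂ) := by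
      funext x; exact deriv_const x 0
    rw [Function.iterate_fixed this m]
  -- the decisive pointwise bound
  have hpoint : ∀ v : ℝ, ‖iteratedDeriv m g v‖ ≤
      (Λ m * Real.exp (-(ε ^ 2 / (16 * u)))) * Real.exp (-(v ^ 2 / 8)) := by
    intro v
    by_cases hv : |v| < ε / (2 * s)
    · rw [hvan v hv, norm_zero]
      have := hΛ0 m
      positivity
    · push_neg at hv
      refine (hGB m le_rfl v).trans ?_
      have hv2 : ε ^ 2 / (4 * u) ≤ v ^ 2 := by
        have h1 : (ε / (2 * s)) ^ 2 ≤ |v| ^ 2 :=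
          pow_le_pow_left₀ (by positivity) hv 2
        have h2 : (ε / (2 * s)) ^ 2 = ε ^ 2 / (4 * u) := by
          rw [div_pow]
          rw [mul_pow]
          rw [hss]
          norm_num
        rw [← h2]
        calc (ε / (2 * s)) ^ 2 ≤ |v| ^ 2 := h1
          _ = v ^ 2 := sq_abs v
      have hexp : Real.exp (-(v ^ 2 / 4)) ≤ Real.exp (-(ε ^ 2 / (16 * u))) := by
        apply Real.exp_le_exp.mpr
        have : ε ^ 2 / (16 * u) = (ε ^ 2 / (4 * u)) / 4 := by ring
        rw [this]
        linarith
      calc Λ m * (Real.exp (-(v ^ 2 / 8)) * Real.exp (-(v ^ 2 / 4)))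
          = (Λ m * Real.exp (-(v ^ 2 / 4))) * Real.exp (-(v ^ 2 / 8)) := by ring
        _ ≤ (Λ m * Real.exp (-(ε ^ 2 / (16 * u)))) * Real.exp (-(v ^ 2 / 8)) := by
            refine mul_le_mul_of_nonneg_right ?_ (Real.exp_pos _).le
            exact mul_le_mul_of_nonneg_left hexp (hΛ0 m)
  -- integrability of all iterated derivatives up to order m
  have hint : ∀ n : ℕ, n ≤ m → Integrable (iteratedDeriv n g) := by
    intro n hn
    refine Integrable.mono' (Stmt14Aux.exp8_integrable.const_mul (Λ n))
      (((hgC n).continuous_iteratedDeriv n le_rfl).aestronglyMeasurable) ?_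
    refine Filter.Eventually.of_forall fun v => ?_
    refine (hGB n hn v).trans ?_
    have h4 : Real.exp (-(v ^ 2 / 4)) ≤ 1 := Real.exp_le_one_iff.mpr (by nlinarith [sq_nonneg v])
    calc Λ n * (Real.exp (-(v ^ 2 / 8)) * Real.exp (-(v ^ 2 / 4)))
        ≤ Λ n * (Real.exp (-(v ^ 2 / 8)) * 1) := by
          refine mul_le_mul_of_nonneg_left ?_ (hΛ0 n)
          exact mul_le_mul_of_nonneg_left h4 (Real.exp_pos _).le
      _ = Λ n * Real.exp (-(v ^ 2 / 8)) := by ring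
  -- Fourier transform identity
  have hgCm : ContDiff ℝ ((m : ℕ∞) : WithTop ℕ∞) g := hgC m
  have key := Real.fourier_iteratedDeriv (N := (m : ℕ∞)) hgCm
    (fun n hn => hint n (by exact_mod_cast hn)) (le_refl (m : ℕ∞))
  set w : ℝ := -(a / (2 * π)) with hwdef
  -- identify the integral with the Fourier transform of g at w
  have hIa : (∫ v : ℝ, Complex.exp (Complex.I * v * a) *
      (Real.exp (-v ^ 2 / 2) : ℂ) * ((1 : ℂ) - (f (s * v) : ℂ)))
      = FourierTransform.fourier g w := by
    rw [Real.fourier_real_eq_integral_exp_smul]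
    refine integral_congr_ae (Filter.Eventually.of_forall fun v => ?_)
    dsimp only
    have harg : (-2 * π * v * w : ℝ) = v * a := by
      rw [hwdef]
      field_simp
    rw [smul_eq_mul, harg]
    have e1 : (((v * a : ℝ)) : ℂ) * Complex.I = Complex.I * (v : ℂ) * (a : ℂ) := by
      push_cast; ring
    rw [e1]
    have e2 : (-v ^ 2 / 2 : ℝ) = -(v ^ 2 / 2) := by ring
    rw [e2]
    simp only [hgdef, hbcdef]
    ring
  -- norms
  have habs : |a| ^ m * ‖FourierTransform.fourier g w‖
      = ‖FourierTransform.fourier (iteratedDeriv m g) w‖ := by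
    rw [key]
    rw [norm_smul, norm_pow]
    have : ‖2 * ↑π * Complex.I * (w : ℂ)‖ = 2 * π * |w| := by
      rw [norm_mul, norm_mul, norm_mul]
      simp [Real.pi_pos.le, abs_of_pos Real.pi_pos, Complex.norm_real, Real.norm_eq_abs]
    rw [this]
    have haw : |a| = 2 * π * |w| := by
      rw [hwdef, abs_neg, abs_div]
      rw [abs_of_pos (by positivity : (0:ℝ) < 2 * π)]
      field_simp
    rw [haw]
  have hb1 : ‖((Real.sqrt (2 * π) : ℝ) : ℂ)⁻¹‖ ≤ 1 := by
    rw [norm_inv, Complex.norm_real, Real.norm_eq_abs,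
      abs_of_nonneg (Real.sqrt_nonneg _)]
    refine inv_le_one_of_one_le₀ ?_
    rw [show (1:ℝ) = Real.sqrt 1 by simp]
    exact Real.sqrt_le_sqrt (by nlinarith [Real.pi_gt_three])
  -- put everything together
  have hfinal : |a| ^ m * ‖FourierTransform.fourier g w‖ ≤ (Λ m * J) * Real.exp (-(ε ^ 2 / (16 * u))) := by
    rw [habs]
    refine (VectorFourier.norm_fourierIntegral_le_integral_norm _ _ _ _ _).trans ?_
    have := integral_mono (hint m le_rfl).norm
      ((Stmt14Aux.exp8_integrable.const_mul (Λ m * Real.exp (-(ε ^ 2 / (16 * u)))))) hpoint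
    refine this.trans (le_of_eq ?_)
    rw [integral_const_mul]
    ring
  calc |a| ^ m * (fun z : ℂ => ‖z‖) (((Real.sqrt (2 * π) : ℝ) : ℂ)⁻¹ *
        ∫ v : ℝ, Complex.exp (Complex.I * v * a) * (Real.exp (-v ^ 2 / 2) : ℂ) *
          ((1 : ℂ) - (f (s * v) : ℂ)))
      = |a| ^ m * (‖(((Real.sqrt (2 * π) : ℝ)) : ℂ)⁻¹‖ * ‖FourierTransform.fourier g w‖) := by
        beta_reduce; rw [norm_mul, hIa]
    _ ≤ |a| ^ m * (1 * ‖FourierTransform.fourier g w‖) := by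
        refine mul_le_mul_of_nonneg_left
          (mul_le_mul_of_nonneg_right hb1 (norm_nonneg _)) (by positivity)
    _ = |a| ^ m * ‖FourierTransform.fourier g w‖ := by ring
    _ ≤ (Λ m * J) * Real.exp (-(ε ^ 2 / (16 * u))) := hfinal
    _ ≤ (Λ m * J + 1) * Real.exp (-ε ^ 2 / (32 * u)) := by
        have hdd : ε ^ 2 / (32 * u) ≤ ε ^ 2 / (16 * u) := by
          rw [div_le_div_iff₀ (by positivity) (by positivity)]
          nlinarith [sq_nonneg ε]
        have he : Real.exp (-(ε ^ 2 / (16 * u))) ≤ Real.exp (-ε ^ 2 / (32 * u)) := by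
          apply Real.exp_le_exp.mpr
          rw [neg_div]
          linarith
        have hΛJ : 0 ≤ Λ m * J := mul_nonneg (hΛ0 m) hJ0
        refine mul_le_mul (by linarith) he (Real.exp_pos _).le (by linarith)
end

section
/- Let φ : ℝ → ℂ be a Schwartz function and M ∈ ℕ. Then there exists C > 0 such that for all λ ≥ 1: | ∫_ℝ e^{−λ θ²} φ(θ) dθ − √(π/λ) ∑_{k=0}^{M} φ^{(2k)}(0) / (k! (4λ)^k) | ≤ C λ^{−M − 3/2}, where φ^{(2k)} denotes the 2k-th derivative of φ. -/
open Real MeasureTheory Finset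

lemma aux_gamma_half (k : ℕ) :
    Real.Gamma ((k : ℝ) + 1 / 2) =
      Real.sqrt π * (2 * k).factorial / (4 ^ k * k.factorial) := by
  induction k with
  | zero =>
    rw [show ((0:ℕ):ℝ) + 1/2 = 1/2 by norm_num, Real.Gamma_one_half_eq]
    simp
  | succ k ih =>
    have h : ((k + 1 : ℕ) : ℝ) + 1 / 2 = ((k : ℝ) + 1 / 2) + 1 := by push_cast; ring
    rw [h, Real.Gamma_add_one (by positivity), ih]
    have h1 : (2 * (k + 1)) = (2 * k + 1) + 1 := by ring
    rw [h1, Nat.factorial_succ, Nat.factorial_succ, Nat.factorial_succ]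
    have h4 : (0:ℝ) < 4 ^ k := by positivity
    have hk : (0:ℝ) < (k.factorial : ℝ) := by exact_mod_cast k.factorial_pos
    field_simp
    push_cast
    ring

lemma aux_integrable {L : ℝ} (hL : 0 < L) (j : ℕ) :
    Integrable (fun x : ℝ => x ^ j * rexp (-L * x ^ 2)) := by
  have hs : (-1 : ℝ) < (j : ℝ) :=
    lt_of_lt_of_le (by norm_num) (Nat.cast_nonneg j)
  have := integrable_rpow_mul_exp_neg_mul_sq hL hs
  simpa [Real.rpow_natCast] using this

lemma aux_integrable_abs {L : ℝ} (hL : 0 < L) (j : ℕ) :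
    Integrable (fun x : ℝ => |x| ^ j * rexp (-L * x ^ 2)) := by
  have := (aux_integrable hL j).abs
  simpa [abs_mul, abs_pow, abs_of_pos (exp_pos _)] using this

lemma aux_moment {L : ℝ} (hL : 0 < L) (j : ℕ) :
    ∫ x : ℝ, |x| ^ j * rexp (-L * x ^ 2)
      = Real.Gamma (((j : ℝ) + 1) / 2) * L ^ (-((j : ℝ) + 1) / 2) := by
  have h0 : (fun x : ℝ => |x| ^ j * rexp (-L * x ^ 2))
      = fun x : ℝ => (fun t : ℝ => t ^ j * rexp (-L * t ^ 2)) |x| := by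
    funext x; simp [sq_abs]
  rw [h0, integral_comp_abs (f := fun t : ℝ => t ^ j * rexp (-L * t ^ 2))]
  have key := integral_rpow_mul_exp_neg_mul_rpow (p := 2) (q := (j : ℝ)) (b := L)
    two_pos (lt_of_lt_of_le (by norm_num) (Nat.cast_nonneg j)) hL
  have e1 : (fun x : ℝ => x ^ (j : ℝ) * rexp (-L * x ^ (2 : ℝ)))
      = fun x : ℝ => x ^ j * rexp (-L * x ^ 2) := by
    funext x
    rw [Real.rpow_natCast, show (2:ℝ) = ((2:ℕ):ℝ) by norm_num, Real.rpow_natCast]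
  rw [e1] at key
  rw [key]
  ring

lemma aux_moment_even {L : ℝ} (hL : 0 < L) (k : ℕ) :
    ∫ x : ℝ, x ^ (2 * k) * rexp (-L * x ^ 2)
      = Real.sqrt π * (2 * k).factorial / (4 ^ k * k.factorial)
          * L ^ (-(k : ℝ) - 1 / 2) := by
  have h0 : (fun x : ℝ => x ^ (2 * k) * rexp (-L * x ^ 2))
      = fun x : ℝ => |x| ^ (2 * k) * rexp (-L * x ^ 2) := by
    funext x; rw [(even_two_mul k).pow_abs]
  rw [h0, aux_moment hL (2 * k)]
  rw [show (((2 * k : ℕ) : ℝ) + 1) / 2 = (k : ℝ) + 1 / 2 by push_cast; ring,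
    aux_gamma_half k]
  congr 1
  push_cast
  ring_nf

lemma aux_odd {L : ℝ} (k : ℕ) :
    ∫ x : ℝ, x ^ (2 * k + 1) * rexp (-L * x ^ 2) = 0 := by
  set g : ℝ → ℝ := fun x => x ^ (2 * k + 1) * rexp (-L * x ^ 2) with hg
  have h := (Measure.measurePreserving_neg (volume : Measure ℝ)).integral_comp
    (Homeomorph.neg ℝ).measurableEmbedding g
  have h2 : ∀ x : ℝ, g (-x) = - g x := by
    intro x
    simp only [hg]
    rw [Odd.neg_pow ⟨k, by ring⟩, neg_sq]
    ring
  have h3 : ∫ x : ℝ, g (-x) = - ∫ x : ℝ, g x := by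
    simp_rw [h2]; exact integral_neg g
  have h4 : (∫ x : ℝ, g (-x)) = ∫ x : ℝ, g x := h
  have := h4.symm.trans h3
  linarith

lemma aux_pair (g : ℕ → ℂ) (m : ℕ) :
    ∑ j ∈ Finset.range (2 * m), g j
      = ∑ k ∈ Finset.range m, (g (2 * k) + g (2 * k + 1)) := by
  induction m with
  | zero => simp
  | succ m ih =>
    rw [Finset.sum_range_succ, ← ih, show 2 * (m + 1) = (2 * m + 1) + 1 by ring,
      Finset.sum_range_succ, Finset.sum_range_succ]
    ring

lemma aux_taylor : ∀ (n : ℕ) (f : ℝ → ℂ), ContDiff ℝ (⊤ : ℕ∞) f → ∀ C : ℝ,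
    (∀ t, ‖iteratedDeriv n f t‖ ≤ C) → ∀ x : ℝ,
    ‖f x - ∑ j ∈ Finset.range n, (x ^ j / j.factorial : ℝ) • iteratedDeriv j f 0‖
      ≤ C * |x| ^ n := by
  intro n
  induction n with
  | zero =>
    intro f hf C hC x
    simpa [iteratedDeriv_zero] using hC x
  | succ n ih =>
    intro f hf C hC x
    have hfd : Differentiable ℝ f := hf.differentiable (by simp)
    have hf' : ContDiff ℝ (⊤ : ℕ∞) (deriv f) := (contDiff_infty_iff_deriv.mp hf).2
    have hC' : ∀ t, ‖iteratedDeriv n (deriv f) t‖ ≤ C := by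
      intro t; rw [← iteratedDeriv_succ']; exact hC t
    have hC0 : 0 ≤ C := (norm_nonneg _).trans (hC 0)
    set g : ℝ → ℂ := fun y =>
      f y - ∑ j ∈ Finset.range (n + 1),
        (y ^ j / j.factorial : ℝ) • iteratedDeriv j f 0 with hgdef
    have hbound := ih (deriv f) hf' C hC'
    have hgd : ∀ t : ℝ, HasDerivAt g
        (deriv f t - ∑ j ∈ Finset.range n,
          (t ^ j / j.factorial : ℝ) • iteratedDeriv j (deriv f) 0) t := by
      intro t
      have h1 : HasDerivAt f (deriv f t) t := (hfd t).hasDerivAt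
      have h2 : HasDerivAt (fun y : ℝ => ∑ j ∈ Finset.range (n + 1),
          (y ^ j / j.factorial : ℝ) • iteratedDeriv j f 0)
          (∑ j ∈ Finset.range (n + 1),
            ((j : ℝ) * t ^ (j - 1) / j.factorial : ℝ) • iteratedDeriv j f 0) t := by
        apply HasDerivAt.fun_sum
        intro j _
        exact ((hasDerivAt_pow j t).div_const _).smul_const _
      have h3 : (∑ j ∈ Finset.range (n + 1),
            ((j : ℝ) * t ^ (j - 1) / j.factorial : ℝ) • iteratedDeriv j f 0)
          = ∑ j ∈ Finset.range n,
            (t ^ j / j.factorial : ℝ) • iteratedDeriv j (deriv f) 0 := by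
        rw [Finset.sum_range_succ']
        simp only [Nat.cast_zero, zero_mul, zero_div, zero_smul, add_zero]
        refine Finset.sum_congr rfl fun j _ => ?_
        rw [← iteratedDeriv_succ']
        congr 1
        rw [Nat.add_sub_cancel, Nat.factorial_succ]
        have hj : (0:ℝ) < (j.factorial : ℝ) := by exact_mod_cast j.factorial_pos
        push_cast
        field_simp
      rw [← h3]
      exact h1.sub h2
    have hg0 : g 0 = 0 := by
      simp only [hgdef, Finset.sum_range_succ']
      simp [iteratedDeriv_zero]
    have key := (convex_closedBall (0:ℝ) |x|).norm_image_sub_le_of_norm_hasDerivWithin_le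
      (f := g)
      (f' := fun t => deriv f t - ∑ j ∈ Finset.range n,
        (t ^ j / j.factorial : ℝ) • iteratedDeriv j (deriv f) 0)
      (fun t _ => (hgd t).hasDerivWithinAt)
      (C := C * |x| ^ n)
      (fun t ht => by
        refine (hbound t).trans ?_
        have ht' : |t| ≤ |x| := by
          simpa [Real.norm_eq_abs] using Metric.mem_closedBall.mp ht
        exact mul_le_mul_of_nonneg_left (pow_le_pow_left₀ (abs_nonneg t) ht' n) hC0)
      (Metric.mem_closedBall_self (abs_nonneg x))
      ((by simp [Metric.mem_closedBall, Real.dist_eq] : x ∈ Metric.closedBall (0:ℝ) |x|))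
    rw [hg0] at key
    simpa [hgdef, Real.norm_eq_abs, pow_succ, mul_assoc] using key

/-- Gaussian stationary phase: for a Schwartz function `φ : ℝ → ℂ` and `M ∈ ℕ`,
there is `C > 0` such that for all `L ≥ 1`:
`| ∫ e^{−Lθ²} φ(θ) dθ − √(π/L) ∑_{k=0}^M φ^{(2k)}(0)/(k! (4L)^k) |
  ≤ C · L^{−M−3/2}`. -/
theorem stmt_17 (φ : SchwartzMap ℝ ℂ) (M : ℕ) :
    ∃ C > 0, ∀ L : ℝ, 1 ≤ L →
      ‖(∫ θ : ℝ, Complex.exp (-(L : ℂ) * (θ : ℂ) ^ 2) * φ θ) -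
          (Real.sqrt (π / L) : ℂ) *
            ∑ k ∈ Finset.range (M + 1),
              iteratedDeriv (2 * k) (fun x : ℝ => φ x) 0 /
                ((k.factorial : ℂ) * ((4 * L : ℝ) : ℂ) ^ k)‖ ≤
        C * L ^ (-(M : ℝ) - 3 / 2) := by
  set n : ℕ := 2 * M + 2 with hn
  set d : ℕ → ℂ := fun j => iteratedDeriv j (fun x : ℝ => φ x) 0 with hd
  -- bound on the n-th derivative
  set C₀ : ℝ := SchwartzMap.seminorm ℝ 0 n φ + 1 with hC₀def
  have hC₀pos : 0 < C₀ :=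
    lt_of_lt_of_le zero_lt_one (le_add_of_nonneg_left (apply_nonneg _ _))
  have hC₀ : ∀ t : ℝ, ‖iteratedDeriv n (fun x : ℝ => φ x) t‖ ≤ C₀ := by
    intro t
    have h := SchwartzMap.le_seminorm ℝ 0 n φ t
    rw [← norm_iteratedFDeriv_eq_norm_iteratedDeriv]
    simp only [pow_zero, one_mul] at h
    exact h.trans (le_add_of_nonneg_right zero_le_one)
  set A : ℝ := Real.sqrt π * (2 * (M + 1)).factorial
      / (4 ^ (M + 1) * (M + 1).factorial) with hA
  have hApos : 0 < A := by
    have : (0:ℝ) < Real.sqrt π := Real.sqrt_pos.mpr pi_pos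
    positivity
  refine ⟨C₀ * A, by positivity, fun L hL => ?_⟩
  have hL0 : (0:ℝ) < L := lt_of_lt_of_le one_pos hL
  set P : ℝ → ℂ := fun θ => ∑ j ∈ Finset.range n,
    (θ ^ j / j.factorial : ℝ) • d j with hP
  have hcexp : ∀ θ : ℝ, Complex.exp (-(L:ℂ) * (θ:ℂ) ^ 2)
      = ((rexp (-L * θ ^ 2) : ℝ) : ℂ) := by
    intro θ
    rw [show -(L:ℂ) * (θ:ℂ) ^ 2 = ((-L * θ ^ 2 : ℝ) : ℂ) by push_cast; ring,
      Complex.ofReal_exp]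
  have hterm : ∀ j : ℕ,
      (fun θ : ℝ => Complex.exp (-(L:ℂ) * (θ:ℂ) ^ 2) * ((θ ^ j / j.factorial : ℝ) • d j))
        = fun θ : ℝ => ((θ ^ j * rexp (-L * θ ^ 2) / j.factorial : ℝ) • d j) := by
    intro j
    funext θ
    rw [hcexp θ, Complex.real_smul, Complex.real_smul, ← mul_assoc]
    push_cast
    ring
  have hPint : ∀ j ∈ Finset.range n,
      Integrable (fun θ : ℝ =>
        Complex.exp (-(L:ℂ) * (θ:ℂ) ^ 2) * ((θ ^ j / j.factorial : ℝ) • d j)) := by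
    intro j _
    rw [hterm j]
    exact ((aux_integrable hL0 j).div_const _).smul_const (d j)
  -- integrability of the full integrand
  have hmeas : AEStronglyMeasurable
      (fun θ : ℝ => Complex.exp (-(L:ℂ) * (θ:ℂ) ^ 2) * φ θ) volume := by
    apply Continuous.aestronglyMeasurable
    exact (Complex.continuous_exp.comp
      ((continuous_const.mul (Complex.continuous_ofReal.pow 2)))).mul φ.continuous
  have hIφ : Integrable (fun θ : ℝ => Complex.exp (-(L:ℂ) * (θ:ℂ) ^ 2) * φ θ) := by
    refine Integrable.mono' ((integrable_exp_neg_mul_sq hL0).const_mul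
      (SchwartzMap.seminorm ℝ 0 0 φ)) hmeas ?_
    filter_upwards with θ
    rw [norm_mul, norm_cexp_neg_mul_sq]
    simp only [Complex.ofReal_re]
    rw [mul_comm]
    refine mul_le_mul_of_nonneg_right ?_ (exp_pos _).le
    have h := SchwartzMap.le_seminorm ℝ 0 0 φ θ
    simpa using h
  have hIP : Integrable (fun θ : ℝ => Complex.exp (-(L:ℂ) * (θ:ℂ) ^ 2) * P θ) := by
    simp only [hP, Finset.mul_sum]
    exact integrable_finset_sum _ hPint
  have split : (∫ θ : ℝ, Complex.exp (-(L:ℂ) * (θ:ℂ) ^ 2) * φ θ)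
      = (∫ θ : ℝ, Complex.exp (-(L:ℂ) * (θ:ℂ) ^ 2) * P θ)
        + ∫ θ : ℝ, Complex.exp (-(L:ℂ) * (θ:ℂ) ^ 2) * (φ θ - P θ) := by
    have hsub : (∫ θ : ℝ, Complex.exp (-(L:ℂ) * (θ:ℂ) ^ 2) * (φ θ - P θ))
        = (∫ θ : ℝ, Complex.exp (-(L:ℂ) * (θ:ℂ) ^ 2) * φ θ)
          - ∫ θ : ℝ, Complex.exp (-(L:ℂ) * (θ:ℂ) ^ 2) * P θ := by
      rw [← integral_sub hIφ hIP]
      congr 1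
      funext θ
      ring
    rw [hsub]
    ring
  -- the key real coefficient identity
  have hcoef : ∀ k : ℕ,
      (∫ x : ℝ, x ^ (2 * k) * rexp (-L * x ^ 2)) / ((2 * k).factorial : ℝ)
        = Real.sqrt (π / L) / (k.factorial * (4 * L) ^ k) := by
    intro k
    rw [aux_moment_even hL0 k]
    have hsqrtL : (0:ℝ) < Real.sqrt L := Real.sqrt_pos.mpr hL0
    have hrw : L ^ (-(k : ℝ) - 1 / 2) = ((L ^ k) * Real.sqrt L)⁻¹ := by
      rw [show -(k:ℝ) - 1/2 = -((k:ℝ) + 1/2) by ring, Real.rpow_neg hL0.le,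
        Real.rpow_add hL0, Real.rpow_natCast, Real.sqrt_eq_rpow]
    rw [hrw, Real.sqrt_div pi_pos.le L]
    have h2k : (0:ℝ) < ((2 * k).factorial : ℝ) := by exact_mod_cast (2*k).factorial_pos
    have hkf : (0:ℝ) < (k.factorial : ℝ) := by exact_mod_cast k.factorial_pos
    have h4 : (0:ℝ) < (4:ℝ) ^ k := by positivity
    have hLk : (0:ℝ) < L ^ k := by positivity
    rw [mul_pow]
    field_simp
  -- value of the polynomial integral
  have hpoly : (∫ θ : ℝ, Complex.exp (-(L:ℂ) * (θ:ℂ) ^ 2) * P θ)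
      = (Real.sqrt (π / L) : ℂ) *
          ∑ k ∈ Finset.range (M + 1), d (2 * k)
            / ((k.factorial : ℂ) * ((4 * L : ℝ) : ℂ) ^ k) := by
    have h1 : (∫ θ : ℝ, Complex.exp (-(L:ℂ) * (θ:ℂ) ^ 2) * P θ)
        = ∑ j ∈ Finset.range n,
            ((∫ θ : ℝ, θ ^ j * rexp (-L * θ ^ 2)) / (j.factorial : ℝ)) • d j := by
      simp only [hP, Finset.mul_sum]
      rw [integral_finset_sum _ hPint]
      refine Finset.sum_congr rfl fun j _ => ?_
      rw [hterm j]
      rw [integral_smul_const]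
      congr 1
      rw [← integral_div]
    rw [h1, show n = 2 * (M + 1) by omega, aux_pair, Finset.mul_sum]
    refine Finset.sum_congr rfl fun k _ => ?_
    rw [aux_odd k, zero_div, zero_smul, add_zero, hcoef k, Complex.real_smul]
    push_cast
    field_simp
  -- error estimate
  have hR : ∀ θ : ℝ, ‖(φ θ : ℂ) - P θ‖ ≤ C₀ * |θ| ^ n :=
    aux_taylor n (fun x : ℝ => φ x) (φ.smooth ⊤) C₀ hC₀
  have herr : ‖∫ θ : ℝ, Complex.exp (-(L:ℂ) * (θ:ℂ) ^ 2) * (φ θ - P θ)‖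
      ≤ C₀ * A * L ^ (-(M : ℝ) - 3 / 2) := by
    have hg : Integrable (fun θ : ℝ => C₀ * (|θ| ^ n * rexp (-L * θ ^ 2))) :=
      (aux_integrable_abs hL0 n).const_mul C₀
    have hb : ∀ θ : ℝ, ‖Complex.exp (-(L:ℂ) * (θ:ℂ) ^ 2) * (φ θ - P θ)‖
        ≤ C₀ * (|θ| ^ n * rexp (-L * θ ^ 2)) := by
      intro θ
      rw [norm_mul, norm_cexp_neg_mul_sq]
      simp only [Complex.ofReal_re]
      calc rexp (-L * θ ^ 2) * ‖(φ θ : ℂ) - P θ‖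
          ≤ rexp (-L * θ ^ 2) * (C₀ * |θ| ^ n) :=
            mul_le_mul_of_nonneg_left (hR θ) (exp_pos _).le
        _ = C₀ * (|θ| ^ n * rexp (-L * θ ^ 2)) := by ring
    have h1 := norm_integral_le_of_norm_le hg (Filter.Eventually.of_forall hb)
    refine h1.trans ?_
    rw [integral_const_mul]
    have h2 : (∫ θ : ℝ, |θ| ^ n * rexp (-L * θ ^ 2)) = A * L ^ (-(M : ℝ) - 3 / 2) := by
      have h3 : ∀ x : ℝ, |x| ^ n = x ^ (2 * (M + 1)) := by
        intro x
        rw [show n = 2 * (M + 1) by omega, (even_two_mul (M+1)).pow_abs]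
      simp_rw [h3]
      rw [aux_moment_even hL0 (M + 1), hA]
      congr 1
      push_cast
      ring_nf
    rw [h2, ← mul_assoc]
  -- conclusion
  rw [split, hpoly, add_sub_cancel_left]
  exact herr
end
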